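/- arXiv:1203.3727 — 5 statements merged into one kernel-verified Lean document; each statement's English description precedes it below -/
import Mathlib

section
/- Let R_ρ be an ordered instance of r-Dense Feedback Arc Set on V = {1,…,n} with ranking ρ, and for each v let In(v) be the number of r-subsets in which v is the selected vertex, l_ρ(v) the number of r-subsets whose σ-maximum under ρ is v (left constraints of v), and b_ρ the number of constraints inconsistent with ρ. Then 2·b_ρ ≥ Σ_{v∈V} |l_ρ(v) − In(v)|. -/
/-- In a dense `r`-FAST instance on `Fin n`, the constraint on `S` is satisfied by the
ranking `ρ` iff the selected vertex `sel S` is `ρ`-last in `S`. -/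
def fastSat {n : ℕ} (sel : Finset (Fin n) → Fin n) (S : Finset (Fin n))
    (ρ : Equiv.Perm (Fin n)) : Prop :=
  ∀ u ∈ S, u ≠ sel S → ρ u < ρ (sel S)

/-- `l_ρ(v)`: the number of `r`-subsets (left constraints) whose `ρ`-maximum is `v`. -/
noncomputable def lCount (n r : ℕ) (ρ : Equiv.Perm (Fin n)) (v : Fin n) : ℕ :=
  {S : Finset (Fin n) | S.card = r ∧ v ∈ S ∧ ∀ u ∈ S, u ≠ v → ρ u < ρ v}.ncard

/-- `In(v)`: the in-degree of `v`, i.e. the number of constraints where `v` is selected. -/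
noncomputable def inDeg (n r : ℕ) (sel : Finset (Fin n) → Fin n) (v : Fin n) : ℕ :=
  {S : Finset (Fin n) | S.card = r ∧ sel S = v}.ncard

/-- `b_ρ`: the number of constraints inconsistent with `ρ`. -/
noncomputable def badCount (n r : ℕ) (sel : Finset (Fin n) → Fin n) (ρ : Equiv.Perm (Fin n)) : ℕ :=
  {S : Finset (Fin n) | S.card = r ∧ ¬ fastSat sel S ρ}.ncard

private lemma ncard_filter {n : ℕ} (p : Finset (Fin n) → Prop) [DecidablePred p] :
    {S : Finset (Fin n) | p S}.ncard = (Finset.univ.filter p).card := by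
  rw [Set.ncard_eq_toFinset_card']
  simp [Set.toFinset_setOf]

private lemma sum_filter_card_le {n : ℕ} (B : Finset (Finset (Fin n)))
    (P : Fin n → Finset (Fin n) → Prop) [∀ v, DecidablePred (P v)]
    (hP : ∀ S v w, P v S → P w S → v = w) :
    ∑ v : Fin n, (B.filter (P v)).card ≤ B.card := by
  have hdisj : ∀ v ∈ (Finset.univ : Finset (Fin n)), ∀ w ∈ (Finset.univ : Finset (Fin n)),
      v ≠ w → Disjoint (B.filter (P v)) (B.filter (P w)) := by
    intro v _ w _ hvw
    rw [Finset.disjoint_left]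
    intro S hS hS'
    simp only [Finset.mem_filter] at hS hS'
    exact hvw (hP S v w hS.2 hS'.2)
  rw [← Finset.card_biUnion hdisj]
  exact Finset.card_le_card (Finset.biUnion_subset.mpr fun v _ => Finset.filter_subset _ _)

/-- For any ranking `ρ` of a dense `r`-FAST instance, `2·b_ρ ≥ Σ_v |l_ρ(v) − In(v)|`. -/
theorem two_bad_ge_sum_abs
    {n r : ℕ} (hr : 2 ≤ r)
    (sel : Finset (Fin n) → Fin n)
    (hsel : ∀ S : Finset (Fin n), S.card = r → sel S ∈ S)
    (ρ : Equiv.Perm (Fin n)) :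
    ∑ v : Fin n, |(lCount n r ρ v : ℤ) - (inDeg n r sel v : ℤ)| ≤
      2 * (badCount n r sel ρ : ℤ) := by
  classical
  set Bad : Finset (Finset (Fin n)) :=
    Finset.univ.filter (fun S : Finset (Fin n) => S.card = r ∧ ¬ fastSat sel S ρ) with hBadDef
  have hb : badCount n r sel ρ = Bad.card := by
    rw [badCount, ncard_filter]
  set LB : Fin n → ℕ := fun v =>
    (Bad.filter (fun S => v ∈ S ∧ ∀ u ∈ S, u ≠ v → ρ u < ρ v)).card with hLB
  set IB : Fin n → ℕ := fun v => (Bad.filter (fun S => sel S = v)).card with hIB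
  have key : ∀ v : Fin n,
      |(lCount n r ρ v : ℤ) - (inDeg n r sel v : ℤ)| ≤ (LB v : ℤ) + (IB v : ℤ) := by
    intro v
    have hl : lCount n r ρ v =
        (Finset.univ.filter (fun S : Finset (Fin n) =>
          (S.card = r ∧ v ∈ S ∧ ∀ u ∈ S, u ≠ v → ρ u < ρ v) ∧ fastSat sel S ρ)).card + LB v := by
      have h1 := Finset.card_filter_add_card_filter_not
        (s := Finset.univ.filter (fun S : Finset (Fin n) =>
          S.card = r ∧ v ∈ S ∧ ∀ u ∈ S, u ≠ v → ρ u < ρ v))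
        (p := fun S => fastSat sel S ρ)
      rw [Finset.filter_filter, Finset.filter_filter] at h1
      rw [lCount, ncard_filter, ← h1]
      congr 1
      simp only [hLB, hBadDef, Finset.filter_filter]
      congr 1
      ext S
      simp only [Finset.mem_filter, Finset.mem_univ, true_and]
      tauto
    have hi : inDeg n r sel v =
        (Finset.univ.filter (fun S : Finset (Fin n) =>
          (S.card = r ∧ sel S = v) ∧ fastSat sel S ρ)).card + IB v := by
      have h1 := Finset.card_filter_add_card_filter_not
        (s := Finset.univ.filter (fun S : Finset (Fin n) => S.card = r ∧ sel S = v))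
        (p := fun S => fastSat sel S ρ)
      rw [Finset.filter_filter, Finset.filter_filter] at h1
      rw [inDeg, ncard_filter, ← h1]
      congr 1
      simp only [hIB, hBadDef, Finset.filter_filter]
      congr 1
      ext S
      simp only [Finset.mem_filter, Finset.mem_univ, true_and]
      tauto
    have hsat : (Finset.univ.filter (fun S : Finset (Fin n) =>
          (S.card = r ∧ v ∈ S ∧ ∀ u ∈ S, u ≠ v → ρ u < ρ v) ∧ fastSat sel S ρ)).card =
        (Finset.univ.filter (fun S : Finset (Fin n) =>
          (S.card = r ∧ sel S = v) ∧ fastSat sel S ρ)).card := by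
      congr 1
      ext S
      simp only [Finset.mem_filter, Finset.mem_univ, true_and]
      constructor
      · rintro ⟨⟨hc, hv, hmax⟩, hs⟩
        refine ⟨⟨hc, ?_⟩, hs⟩
        by_contra hne
        have h1 : ρ v < ρ (sel S) := hs v hv (fun h => hne h.symm)
        have h2 : ρ (sel S) < ρ v := hmax (sel S) (hsel S hc) (fun h => hne h)
        exact absurd h1 (not_lt.mpr h2.le)
      · rintro ⟨⟨hc, hv⟩, hs⟩
        refine ⟨⟨hc, hv ▸ hsel S hc, ?_⟩, hs⟩
        intro u hu hne
        have := hs u hu (fun h => hne (h.trans hv))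
        rwa [hv] at this
    calc |(lCount n r ρ v : ℤ) - (inDeg n r sel v : ℤ)| = |(LB v : ℤ) - (IB v : ℤ)| := by
          rw [hl, hi, hsat]; push_cast; ring_nf
      _ ≤ (LB v : ℤ) + (IB v : ℤ) := by
          rw [abs_sub_le_iff]
          constructor <;> linarith [Int.natCast_nonneg (LB v), Int.natCast_nonneg (IB v)]
  have hLBsum : ∑ v : Fin n, LB v ≤ Bad.card := by
    apply sum_filter_card_le
    intro S v w hv hw
    by_contra hvw
    have h1 := hv.2 w hw.1 (Ne.symm hvw)
    have h2 := hw.2 v hv.1 hvw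
    exact absurd h1 (not_lt.mpr h2.le)
  have hIBsum : ∑ v : Fin n, IB v ≤ Bad.card := by
    apply sum_filter_card_le
    intro S v w hv hw
    rw [← hv, ← hw]
  calc ∑ v : Fin n, |(lCount n r ρ v : ℤ) - (inDeg n r sel v : ℤ)|
      ≤ ∑ v : Fin n, ((LB v : ℤ) + (IB v : ℤ)) := Finset.sum_le_sum fun v _ => key v
    _ = ((∑ v : Fin n, LB v : ℕ) : ℤ) + ((∑ v : Fin n, IB v : ℕ) : ℤ) := by
        push_cast; rw [Finset.sum_add_distrib]
    _ ≤ (Bad.card : ℤ) + (Bad.card : ℤ) :=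
        add_le_add (by exact_mod_cast hLBsum) (by exact_mod_cast hIBsum)
    _ = 2 * (badCount n r sel ρ : ℤ) := by rw [hb]; ring
end

section
/- Let R be a dense instance of r-Dense Feedback Arc Set on V = {1,…,n}, In(v) the in-degree of v (number of constraints where v is selected), and for a ranking ρ let l_ρ(v) = C(ρ(v)−1, r−1). If σ_A is any ranking ordering vertices by non-decreasing in-degree, then for every ranking ρ, Σ_{v∈V} |l_ρ(v) − In(v)| ≥ Σ_{v∈V} |l_{σ_A}(v) − In(v)|. -/
-- upper sets in a linear order are nested
lemma nested_of_upper {n : ℕ} (F B : Finset (Fin n))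
    (hF : ∀ x y : Fin n, x ≤ y → x ∈ F → y ∈ F)
    (hB : ∀ x y : Fin n, x ≤ y → x ∈ B → y ∈ B) :
    F ⊆ B ∨ B ⊆ F := by
  by_contra h
  push_neg at h
  obtain ⟨h1, h2⟩ := h
  obtain ⟨x, hxF, hxB⟩ := Finset.not_subset.mp h1
  obtain ⟨y, hyB, hyF⟩ := Finset.not_subset.mp h2
  rcases le_total x y with hxy | hyx
  · exact hyF (hF x y hxy hxF)
  · exact hxB (hB y x hyx hyB)

lemma min_as_card (M x y : ℕ) (h : min x y ≤ M) :
    min x y = ((Finset.range M).filter (fun t => t < x ∧ t < y)).card := by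
  have : (Finset.range M).filter (fun t => t < x ∧ t < y) = Finset.range (min x y) := by
    ext t
    simp only [Finset.mem_filter, Finset.mem_range]
    omega
  rw [this, Finset.card_range]

lemma sum_min_perm_le {n : ℕ} (f b : Fin n → ℕ)
    (hf : ∀ x y : Fin n, x ≤ y → f x ≤ f y)
    (hb : ∀ x y : Fin n, x ≤ y → b x ≤ b y)
    (π : Equiv.Perm (Fin n)) :
    ∑ w : Fin n, min (f (π w)) (b w) ≤ ∑ w : Fin n, min (f w) (b w) := by
  set M := ∑ w : Fin n, b w with hM
  have hble : ∀ w : Fin n, b w ≤ M := fun w =>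
    Finset.single_le_sum (fun i _ => Nat.zero_le (b i)) (Finset.mem_univ w)
  have hL : ∀ w : Fin n, min (f (π w)) (b w) =
      ((Finset.range M).filter (fun t => t < f (π w) ∧ t < b w)).card := fun w =>
    min_as_card M _ _ (le_trans (min_le_right _ _) (hble w))
  have hR : ∀ w : Fin n, min (f w) (b w) =
      ((Finset.range M).filter (fun t => t < f w ∧ t < b w)).card := fun w =>
    min_as_card M _ _ (le_trans (min_le_right _ _) (hble w))
  simp only [hL, hR]
  -- turn cards into double sums and swap
  have swap : ∀ g : Fin n → ℕ → Prop, ∀ inst : DecidablePred fun p : Fin n × ℕ => True,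
      True := fun _ _ => trivial
  calc ∑ w : Fin n, ((Finset.range M).filter (fun t => t < f (π w) ∧ t < b w)).card
      = ∑ t ∈ Finset.range M,
          ((Finset.univ : Finset (Fin n)).filter (fun w => t < f (π w) ∧ t < b w)).card := by
        simp only [Finset.card_filter]
        rw [Finset.sum_comm]
    _ ≤ ∑ t ∈ Finset.range M,
          ((Finset.univ : Finset (Fin n)).filter (fun w => t < f w ∧ t < b w)).card := by
        apply Finset.sum_le_sum
        intro t _
        set F := (Finset.univ : Finset (Fin n)).filter (fun w => t < f w) with hF
        set B := (Finset.univ : Finset (Fin n)).filter (fun w => t < b w) with hB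
        have hFup : ∀ x y : Fin n, x ≤ y → x ∈ F → y ∈ F := by
          intro x y hxy hx
          simp only [hF, Finset.mem_filter, Finset.mem_univ, true_and] at hx ⊢
          exact lt_of_lt_of_le hx (hf x y hxy)
        have hBup : ∀ x y : Fin n, x ≤ y → x ∈ B → y ∈ B := by
          intro x y hxy hx
          simp only [hB, Finset.mem_filter, Finset.mem_univ, true_and] at hx ⊢
          exact lt_of_lt_of_le hx (hb x y hxy)
        have hRHS : (Finset.univ.filter (fun w => t < f w ∧ t < b w)).card
            = min F.card B.card := by
          have : (Finset.univ.filter (fun w => t < f w ∧ t < b w)) = F ∩ B := by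
            rw [hF, hB, ← Finset.filter_and]
          rw [this]
          rcases nested_of_upper F B hFup hBup with hsub | hsub
          · rw [Finset.inter_eq_left.mpr hsub, min_eq_left (Finset.card_le_card hsub)]
          · rw [Finset.inter_eq_right.mpr hsub, min_eq_right (Finset.card_le_card hsub)]
        rw [hRHS]
        apply le_min
        · -- bound by F.card
          have h1 : (Finset.univ.filter (fun w => t < f (π w) ∧ t < b w))
              ⊆ (Finset.univ.filter (fun w => t < f (π w))) := by
            intro w hw
            simp only [Finset.mem_filter] at hw ⊢
            exact ⟨hw.1, hw.2.1⟩
          have h2 : (Finset.univ.filter (fun w => t < f (π w))) = F.map π.symm.toEmbedding := by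
            ext w
            simp [hF, Finset.mem_map_equiv]
          calc (Finset.univ.filter (fun w => t < f (π w) ∧ t < b w)).card
              ≤ (Finset.univ.filter (fun w => t < f (π w))).card := Finset.card_le_card h1
            _ = F.card := by rw [h2, Finset.card_map]
        · apply Finset.card_le_card
          intro w hw
          simp only [hB, Finset.mem_filter] at hw ⊢
          exact ⟨hw.1, hw.2.2⟩
    _ = ∑ w : Fin n, ((Finset.range M).filter (fun t => t < f w ∧ t < b w)).card := by
        simp only [Finset.card_filter]
        rw [Finset.sum_comm]

lemma abs_sub_nat (x y : ℕ) :
    |((x : ℤ)) - (y : ℤ)| = (x : ℤ) + (y : ℤ) - 2 * ((min x y : ℕ) : ℤ) := by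
  rcases le_total x y with h | h
  · rw [abs_of_nonpos (by exact_mod_cast sub_nonpos.mpr (Int.ofNat_le.mpr h)),
      min_eq_left h]
    ring
  · rw [abs_of_nonneg (by exact_mod_cast sub_nonneg.mpr (Int.ofNat_le.mpr h)),
      min_eq_right h]
    ring


/-- On a dense `r`-FAST instance, `l_ρ(v) = C(ρ(v)−1, r−1)` (with 0-based positions,
`C(ρ(v), r−1)`). If `σ_A` orders the vertices by non-decreasing in-degree, then for every
ranking `ρ`, `Σ_v |l_ρ(v) − In(v)| ≥ Σ_v |l_{σ_A}(v) − In(v)|`. -/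
theorem incdegree_minimizes_sum
    {n r : ℕ} (hr : 2 ≤ r)
    (sel : Finset (Fin n) → Fin n)
    (hsel : ∀ S : Finset (Fin n), S.card = r → sel S ∈ S)
    (σA : Equiv.Perm (Fin n))
    (hA : ∀ u v : Fin n, σA u < σA v → inDeg n r sel u ≤ inDeg n r sel v)
    (ρ : Equiv.Perm (Fin n)) :
    ∑ v : Fin n, |((σA v : ℕ).choose (r - 1) : ℤ) - (inDeg n r sel v : ℤ)| ≤
      ∑ v : Fin n, |((ρ v : ℕ).choose (r - 1) : ℤ) - (inDeg n r sel v : ℤ)| := by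
  set a : Fin n → ℕ := fun v => inDeg n r sel v with ha
  set f : Fin n → ℕ := fun w => ((w : ℕ)).choose (r - 1) with hfdef
  -- rewrite abs
  have key : ∀ σ : Equiv.Perm (Fin n),
      ∑ v : Fin n, |((σ v : ℕ).choose (r - 1) : ℤ) - (a v : ℤ)|
        = (∑ v : Fin n, (f v : ℤ)) + (∑ v : Fin n, (a v : ℤ))
          - 2 * ∑ v : Fin n, ((min (f (σ v)) (a v) : ℕ) : ℤ) := by
    intro σ
    have : ∀ v : Fin n, |((σ v : ℕ).choose (r - 1) : ℤ) - (a v : ℤ)|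
        = (f (σ v) : ℤ) + (a v : ℤ) - 2 * ((min (f (σ v)) (a v) : ℕ) : ℤ) := fun v =>
      abs_sub_nat _ _
    rw [Finset.sum_congr rfl (fun v _ => this v)]
    rw [Finset.sum_sub_distrib, Finset.sum_add_distrib, ← Finset.mul_sum]
    congr 2
    exact Equiv.sum_comp σ (fun v => (f v : ℤ))
  rw [key σA, key ρ]
  have main : ∑ v : Fin n, min (f (ρ v)) (a v) ≤ ∑ v : Fin n, min (f (σA v)) (a v) := by
    set b : Fin n → ℕ := fun w => a (σA.symm w) with hb
    have hbmono : ∀ x y : Fin n, x ≤ y → b x ≤ b y := by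
      intro x y hxy
      rcases lt_or_eq_of_le hxy with hlt | heq
      · apply hA
        simpa using hlt
      · rw [heq]
    have hfmono : ∀ x y : Fin n, x ≤ y → f x ≤ f y := by
      intro x y hxy
      exact Nat.choose_le_choose _ hxy
    have e1 : ∑ v : Fin n, min (f (ρ v)) (a v)
        = ∑ w : Fin n, min (f ((σA.symm.trans ρ) w)) (b w) := by
      rw [← Equiv.sum_comp σA.symm (fun v => min (f (ρ v)) (a v))]
      rfl
    have e2 : ∑ v : Fin n, min (f (σA v)) (a v) = ∑ w : Fin n, min (f w) (b w) := by
      rw [← Equiv.sum_comp σA.symm (fun v => min (f (σA v)) (a v))]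
      simp [hb]
    rw [e1, e2]
    exact sum_min_perm_le f b hfmono hbmono (σA.symm.trans ρ)
  have castmain : (∑ v : Fin n, ((min (f (ρ v)) (a v) : ℕ) : ℤ))
      ≤ ∑ v : Fin n, ((min (f (σA v)) (a v) : ℕ) : ℤ) := by
    exact_mod_cast main
  linarith
end

section
/- Let ρ and γ be two rankings of a dense instance of r-Dense Feedback Arc Set, b_ρ and b_γ the respective numbers of inconsistent constraints, and l_ρ(v), l_γ(v) the respective numbers of left constraints of v. Then Σ_{v∈V} |l_ρ(v) − l_γ(v)| ≥ |b_ρ − b_γ|. -/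
attribute [local instance] Classical.propDecidable

namespace RFastAux

open Finset

def Fw (w : ℕ → ℤ) (x : ℕ) : ℤ := ∑ t ∈ Finset.range x, w t

lemma Fw_succ (w : ℕ → ℤ) (x : ℕ) : Fw w (x + 1) = Fw w x + w x :=
  Finset.sum_range_succ _ _

lemma Fw_mono {w : ℕ → ℤ} (hw : ∀ t, 0 ≤ w t) : Monotone (Fw w) := by
  intro a b hab
  exact Finset.sum_le_sum_of_subset_of_nonneg (Finset.range_subset_range.2 hab)
    (fun t _ _ => hw t)

lemma Fw_sub (w : ℕ → ℤ) {a b : ℕ} (h : a ≤ b) :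
    Fw w b - Fw w a = ∑ t ∈ Finset.Ico a b, w t :=
  (Finset.sum_Ico_eq_sub _ h).symm

lemma card_filter_lt {N : ℕ} (x : Fin N) :
    #(Finset.univ.filter fun l => l < x) = (x : ℕ) := by
  rw [show (Finset.univ.filter fun l => l < x) = Finset.Iio x from by ext l; simp,
    Fin.card_Iio]

lemma card_filter_le {N : ℕ} (x : Fin N) :
    #(Finset.univ.filter fun l => l ≤ x) = (x : ℕ) + 1 := by
  rw [show (Finset.univ.filter fun l => l ≤ x) = Finset.Iic x from by ext l; simp,
    Fin.card_Iic]

def minv {N : ℕ} (σ : Equiv.Perm (Fin N)) (i : Fin N) : ℕ :=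
  #(Finset.univ.filter fun l => l < i ∧ σ l < σ i)

section Step

variable {N : ℕ}

theorem step_main (w : ℕ → ℤ) (hw0 : ∀ t, 0 ≤ w t) (hwm : Monotone w)
    (σ : Equiv.Perm (Fin N)) (i0 : Fin N)
    (hfix : ∀ k, k < i0 → σ k = k) (hi0 : σ i0 ≠ i0)
    (IH : ∀ (τ : Equiv.Perm (Fin N)),
      #(Finset.univ.filter fun i => τ i ≠ i) < #(Finset.univ.filter fun i => σ i ≠ i) →
      ∑ i : Fin N, (Fw w (i : ℕ) - Fw w (minv τ i)) ≤
        2 * ∑ i : Fin N, max (Fw w (i : ℕ) - Fw w ((τ i : Fin N) : ℕ)) 0) :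
    ∑ i : Fin N, (Fw w (i : ℕ) - Fw w (minv σ i)) ≤
      2 * ∑ i : Fin N, max (Fw w (i : ℕ) - Fw w ((σ i : Fin N) : ℕ)) 0 := by
  classical
  have hvalfix : ∀ l, σ l < i0 → σ l = l := by
    intro l hl
    have h1 : σ (σ l) = σ l := hfix _ hl
    exact σ.injective h1
  set a := σ i0 with ha
  have hia : i0 < a := by
    rcases lt_trichotomy a i0 with h | h | h
    · exact absurd (hvalfix i0 h) hi0
    · exact absurd h hi0
    · exact h
  set j := σ.symm i0 with hj
  have hσj : σ j = i0 := σ.apply_symm_apply i0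
  have hji0 : j ≠ i0 := by
    intro h
    rw [h] at hσj
    exact hi0 hσj
  have hij : i0 < j := by
    rcases lt_trichotomy j i0 with h | h | h
    · have h2 : σ j = j := hfix _ h
      rw [hσj] at h2
      exact absurd h2.symm hji0
    · exact absurd h hji0
    · exact h
  -- any index strictly above i0 other than j has value above i0
  have hbig : ∀ i : Fin N, i0 < i → i ≠ j → i0 < σ i := by
    intro i h1 h2
    have hne : σ i ≠ i0 := by
      intro h
      exact h2 (σ.injective (h.trans hσj.symm))
    rcases lt_trichotomy (σ i) i0 with h | h | h
    · have := hvalfix i h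
      rw [this] at h
      exact absurd h1 (not_lt.2 (le_of_lt h))
    · exact absurd h hne
    · exact h
  -- the modified permutation
  set σ' := σ * Equiv.swap i0 j with hσ'
  have hσ'i0 : σ' i0 = i0 := by
    rw [hσ', Equiv.Perm.mul_apply, Equiv.swap_apply_left, hσj]
  have hσ'j : σ' j = a := by
    rw [hσ', Equiv.Perm.mul_apply, Equiv.swap_apply_right, ha]
  have hσ'x : ∀ x, x ≠ i0 → x ≠ j → σ' x = σ x := by
    intro x h1 h2
    rw [hσ', Equiv.Perm.mul_apply, Equiv.swap_apply_of_ne_of_ne h1 h2]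
  -- decrease of the number of misplaced points
  have hless : #(Finset.univ.filter fun i => σ' i ≠ i) <
      #(Finset.univ.filter fun i => σ i ≠ i) := by
    have hsub : (Finset.univ.filter fun i => σ' i ≠ i) ⊆
        (Finset.univ.filter fun i => σ i ≠ i).erase i0 := by
      intro x hx
      simp only [Finset.mem_filter, Finset.mem_univ, true_and] at hx
      rcases eq_or_ne x i0 with rfl | h1
      · exact absurd hσ'i0 hx
      rcases eq_or_ne x j with rfl | h2
      · refine Finset.mem_erase.2 ⟨h1, ?_⟩
        simp only [Finset.mem_filter, Finset.mem_univ, true_and]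
        rw [hσj]; exact fun h => hji0 h.symm
      · refine Finset.mem_erase.2 ⟨h1, ?_⟩
        simp only [Finset.mem_filter, Finset.mem_univ, true_and]
        rw [← hσ'x x h1 h2]; exact hx
    have hmem : i0 ∈ (Finset.univ.filter fun i => σ i ≠ i) := by
      simp only [Finset.mem_filter, Finset.mem_univ, true_and]; exact hi0
    calc #(Finset.univ.filter fun i => σ' i ≠ i)
        ≤ #((Finset.univ.filter fun i => σ i ≠ i).erase i0) := Finset.card_le_card hsub
      _ < #(Finset.univ.filter fun i => σ i ≠ i) :=
          Finset.card_erase_lt_of_mem hmem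
  -- the exceptional middle set
  set D := Finset.univ.filter (fun i : Fin N => i0 < i ∧ i < j ∧ σ i < a) with hD
  set c := #D with hc
  -- minv computations
  have hm_i0 : minv σ i0 = (i0 : ℕ) := by
    unfold minv
    rw [show (Finset.univ.filter fun l => l < i0 ∧ σ l < σ i0)
        = Finset.univ.filter fun l => l < i0 from by
      ext l
      simp only [Finset.mem_filter, Finset.mem_univ, true_and, and_iff_left_iff_imp]
      intro hl
      rw [hfix l hl]
      exact lt_trans hl hia]
    exact card_filter_lt i0
  have hm'_i0 : minv σ' i0 = (i0 : ℕ) := by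
    unfold minv
    rw [show (Finset.univ.filter fun l => l < i0 ∧ σ' l < σ' i0)
        = Finset.univ.filter fun l => l < i0 from by
      ext l
      simp only [Finset.mem_filter, Finset.mem_univ, true_and, and_iff_left_iff_imp]
      intro hl
      have h1 : σ' l = σ l := hσ'x l (ne_of_lt hl) (ne_of_lt (lt_trans hl hij))
      rw [h1, hfix l hl, hσ'i0]
      exact hl]
    exact card_filter_lt i0
  have hm_j : minv σ j = (i0 : ℕ) := by
    unfold minv
    rw [show (Finset.univ.filter fun l => l < j ∧ σ l < σ j)
        = Finset.univ.filter fun l => l < i0 from by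
      ext l
      simp only [Finset.mem_filter, Finset.mem_univ, true_and, hσj]
      constructor
      · rintro ⟨-, h2⟩
        have := hvalfix l h2
        rwa [this] at h2
      · intro hl
        refine ⟨lt_trans hl hij, ?_⟩
        rw [hfix l hl]
        exact hl]
    exact card_filter_lt i0
  have hm'_j : minv σ' j = (i0 : ℕ) + 1 + c := by
    unfold minv
    rw [show (Finset.univ.filter fun l => l < j ∧ σ' l < σ' j)
        = (Finset.univ.filter fun l => l ≤ i0) ∪ D from by
      ext l
      simp only [Finset.mem_union, Finset.mem_filter, Finset.mem_univ, true_and, hσ'j, hD]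
      constructor
      · rintro ⟨h1, h2⟩
        rcases lt_trichotomy l i0 with h3 | h3 | h3
        · exact Or.inl (le_of_lt h3)
        · exact Or.inl (le_of_eq h3)
        · refine Or.inr ⟨h3, h1, ?_⟩
          rwa [hσ'x l (ne_of_gt h3) (ne_of_lt h1)] at h2
      · rintro (h1 | ⟨h1, h2, h3⟩)
        · rcases lt_or_eq_of_le h1 with h2 | h2
          · refine ⟨lt_trans h2 hij, ?_⟩
            rw [hσ'x l (ne_of_lt h2) (ne_of_lt (lt_trans h2 hij)), hfix l h2]
            exact lt_trans h2 hia
          · subst h2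
            exact ⟨hij, by rw [hσ'i0]; exact hia⟩
        · refine ⟨h2, ?_⟩
          rwa [hσ'x l (ne_of_gt h1) (ne_of_lt h2)]]
    have hdisj : Disjoint (Finset.univ.filter fun l => l ≤ i0) D := by
      rw [Finset.disjoint_left]
      intro x hx hx2
      simp only [Finset.mem_filter, Finset.mem_univ, true_and] at hx
      rw [hD] at hx2
      simp only [Finset.mem_filter, Finset.mem_univ, true_and] at hx2
      exact absurd hx (not_le.2 hx2.1)
    rw [Finset.card_union_of_disjoint hdisj, card_filter_le]
  have hm_D : ∀ i ∈ D, minv σ' i = minv σ i + 1 := by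
    intro i hi
    rw [hD] at hi
    simp only [Finset.mem_filter, Finset.mem_univ, true_and] at hi
    obtain ⟨h1, h2, h3⟩ := hi
    have hni0 : i ≠ i0 := ne_of_gt h1
    have hnj : i ≠ j := ne_of_lt h2
    have hσ'i : σ' i = σ i := hσ'x i hni0 hnj
    have hbigi : i0 < σ i := hbig i h1 hnj
    unfold minv
    rw [show (Finset.univ.filter fun l => l < i ∧ σ' l < σ' i)
        = insert i0 (Finset.univ.filter fun l => l < i ∧ σ l < σ i) from by
      ext l
      simp only [Finset.mem_insert, Finset.mem_filter, Finset.mem_univ, true_and, hσ'i]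
      constructor
      · rintro ⟨hl1, hl2⟩
        rcases eq_or_ne l i0 with rfl | hne
        · exact Or.inl rfl
        · refine Or.inr ⟨hl1, ?_⟩
          rwa [hσ'x l hne (ne_of_lt (lt_trans hl1 h2))] at hl2
      · rintro (rfl | ⟨hl1, hl2⟩)
        · exact ⟨h1, by rw [hσ'i0]; exact hbigi⟩
        · refine ⟨hl1, ?_⟩
          rcases eq_or_ne l i0 with rfl | hne
          · rw [hσ'i0]; exact hbigi
          · rwa [hσ'x l hne (ne_of_lt (lt_trans hl1 h2))]]
    have hnotmem : i0 ∉ (Finset.univ.filter fun l => l < i ∧ σ l < σ i) := by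
      intro hmem
      rw [Finset.mem_filter] at hmem
      exact lt_asymm h3 (ha ▸ hmem.2.2)
    rw [Finset.card_insert_of_notMem hnotmem]
  have hm_other : ∀ i : Fin N, i ≠ i0 → i ≠ j → i ∉ D → minv σ' i = minv σ i := by
    intro i hni0 hnj hnD
    have hσ'i : σ' i = σ i := hσ'x i hni0 hnj
    by_cases hlt : i < j
    · rcases lt_trichotomy i i0 with h1 | h1 | h1
      · -- i < i0 : all relevant l are < i0, untouched
        unfold minv
        congr 1
        ext l
        simp only [Finset.mem_filter, Finset.mem_univ, true_and, hσ'i]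
        constructor <;> rintro ⟨hl1, hl2⟩ <;> refine ⟨hl1, ?_⟩
        · rwa [hσ'x l (ne_of_lt (lt_trans hl1 h1))
            (ne_of_lt (lt_trans (lt_trans hl1 h1) hij))] at hl2
        · rwa [hσ'x l (ne_of_lt (lt_trans hl1 h1))
            (ne_of_lt (lt_trans (lt_trans hl1 h1) hij))]
      · exact absurd h1 hni0
      · -- i0 < i < j, a < σ i
        have hba : a < σ i := by
          have hne : σ i ≠ a := fun h => hni0 (σ.injective h)
          have : ¬ (σ i < a) := by
            intro hcon
            apply hnD
            rw [hD]
            simp only [Finset.mem_filter, Finset.mem_univ, true_and]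
            exact ⟨h1, hlt, hcon⟩
          rcases lt_trichotomy (σ i) a with h | h | h
          · exact absurd h this
          · exact absurd h hne
          · exact h
        unfold minv
        congr 1
        ext l
        simp only [Finset.mem_filter, Finset.mem_univ, true_and, hσ'i]
        constructor
        · rintro ⟨hl1, hl2⟩
          refine ⟨hl1, ?_⟩
          rcases eq_or_ne l i0 with rfl | hne
          · rw [← ha]; exact hba
          · rwa [hσ'x l hne (ne_of_lt (lt_trans hl1 hlt))] at hl2
        · rintro ⟨hl1, hl2⟩
          refine ⟨hl1, ?_⟩
          rcases eq_or_ne l i0 with rfl | hne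
          · rw [hσ'i0]; exact hbig i h1 hnj
          · rwa [hσ'x l hne (ne_of_lt (lt_trans hl1 hlt))]
    · -- j < i : swap bijection
      have hji : j < i := lt_of_le_of_ne (not_lt.1 hlt) (Ne.symm hnj)
      have hswaplt : ∀ l : Fin N, l < i → Equiv.swap i0 j l < i := by
        intro l hl
        rcases eq_or_ne l i0 with rfl | h1
        · rw [Equiv.swap_apply_left]; exact hji
        rcases eq_or_ne l j with rfl | h2
        · rw [Equiv.swap_apply_right]; exact lt_trans hij hji
        · rw [Equiv.swap_apply_of_ne_of_ne h1 h2]; exact hl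
      have hσswap : ∀ l : Fin N, σ' l = σ (Equiv.swap i0 j l) := by
        intro l
        rw [hσ', Equiv.Perm.mul_apply]
      unfold minv
      apply Finset.card_nbij' (fun l => Equiv.swap i0 j l) (fun l => Equiv.swap i0 j l)
      · intro l hl
        simp only [Finset.mem_coe, Finset.mem_filter, Finset.mem_univ, true_and, hσ'i] at hl ⊢
        exact ⟨hswaplt l hl.1, by rw [← hσswap l]; exact hl.2⟩
      · intro l hl
        simp only [Finset.mem_coe, Finset.mem_filter, Finset.mem_univ, true_and, hσ'i] at hl ⊢
        refine ⟨hswaplt l hl.1, ?_⟩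
        rw [hσswap (Equiv.swap i0 j l), Equiv.swap_apply_self]
        exact hl.2
      · intro l _
        exact Equiv.swap_apply_self _ _ _
      · intro l _
        exact Equiv.swap_apply_self _ _ _
  -- the cutoff value
  set KN : ℕ := min ((a : Fin N) : ℕ) ((j : Fin N) : ℕ) with hKN
  have hKi0 : (i0 : ℕ) < KN := lt_min hia hij
  -- rearrangement of the left-hand side
  have key1 : ∑ i : Fin N, (Fw w (minv σ' i) - Fw w (minv σ i))
      = (∑ i ∈ D, w (minv σ i)) + (Fw w ((i0 : ℕ) + 1 + c) - Fw w (i0 : ℕ)) := by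
    have hzero : ∀ i ∈ Finset.univ, i ∉ insert j D →
        Fw w (minv σ' i) - Fw w (minv σ i) = 0 := by
      intro i _ hi
      rw [Finset.mem_insert] at hi
      push_neg at hi
      rcases eq_or_ne i i0 with rfl | h1
      · rw [hm_i0, hm'_i0]; ring
      · rw [hm_other i h1 hi.1 hi.2]; ring
    have hjD : j ∉ D := by
      rw [hD]
      simp only [Finset.mem_filter, Finset.mem_univ, true_and, not_and]
      intro _ h
      exact absurd h (lt_irrefl j)
    rw [← Finset.sum_subset (Finset.subset_univ (insert j D)) hzero,
      Finset.sum_insert hjD, hm_j, hm'_j]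
    have : ∀ i ∈ D, Fw w (minv σ' i) - Fw w (minv σ i) = w (minv σ i) := by
      intro i hi
      rw [hm_D i hi, Fw_succ]
      ring
    rw [Finset.sum_congr rfl this]
    ring
  -- rearrangement of the right-hand side
  have key2 : ∑ i : Fin N, max (Fw w (i : ℕ) - Fw w ((σ' i : Fin N) : ℕ)) 0
      = (∑ i : Fin N, max (Fw w (i : ℕ) - Fw w ((σ i : Fin N) : ℕ)) 0)
        - (Fw w KN - Fw w (i0 : ℕ)) := by
    have hzero : ∀ x ∈ Finset.univ, x ∉ ({i0, j} : Finset (Fin N)) →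
        max (Fw w (x : ℕ) - Fw w ((σ' x : Fin N) : ℕ)) 0
          - max (Fw w (x : ℕ) - Fw w ((σ x : Fin N) : ℕ)) 0 = 0 := by
      intro x _ hx
      simp only [Finset.mem_insert, Finset.mem_singleton] at hx
      push_neg at hx
      rw [hσ'x x hx.1 hx.2]
      ring
    have hsum : ∑ x : Fin N, (max (Fw w (x : ℕ) - Fw w ((σ' x : Fin N) : ℕ)) 0
          - max (Fw w (x : ℕ) - Fw w ((σ x : Fin N) : ℕ)) 0)
        = ∑ x ∈ ({i0, j} : Finset (Fin N)),
            (max (Fw w (x : ℕ) - Fw w ((σ' x : Fin N) : ℕ)) 0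
              - max (Fw w (x : ℕ) - Fw w ((σ x : Fin N) : ℕ)) 0) :=
      (Finset.sum_subset (Finset.subset_univ _) hzero).symm
    have hpair : ∑ x ∈ ({i0, j} : Finset (Fin N)),
          (max (Fw w (x : ℕ) - Fw w ((σ' x : Fin N) : ℕ)) 0
            - max (Fw w (x : ℕ) - Fw w ((σ x : Fin N) : ℕ)) 0)
        = - (Fw w KN - Fw w (i0 : ℕ)) := by
      rw [Finset.sum_pair (Ne.symm hji0), hσ'i0, hσ'j, hσj]
      have e1 : max (Fw w (i0 : ℕ) - Fw w (i0 : ℕ)) 0 = 0 := by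
        rw [sub_self, max_self]
      have e2 : max (Fw w ((i0 : Fin N) : ℕ) - Fw w ((a : Fin N) : ℕ)) 0 = 0 :=
        max_eq_right (sub_nonpos.2 (Fw_mono hw0 (le_of_lt hia)))
      have e3 : max (Fw w ((j : Fin N) : ℕ) - Fw w ((i0 : Fin N) : ℕ)) 0
          = Fw w ((j : Fin N) : ℕ) - Fw w ((i0 : Fin N) : ℕ) :=
        max_eq_left (sub_nonneg.2 (Fw_mono hw0 (le_of_lt hij)))
      rw [e1, e2, e3]
      rcases le_total ((a : Fin N) : ℕ) ((j : Fin N) : ℕ) with hcase | hcase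
      · have e4 : max (Fw w ((j : Fin N) : ℕ) - Fw w ((a : Fin N) : ℕ)) 0
            = Fw w ((j : Fin N) : ℕ) - Fw w ((a : Fin N) : ℕ) :=
          max_eq_left (sub_nonneg.2 (Fw_mono hw0 hcase))
        rw [e4, hKN, min_eq_left hcase]
        ring
      · have e4 : max (Fw w ((j : Fin N) : ℕ) - Fw w ((a : Fin N) : ℕ)) 0 = 0 :=
          max_eq_right (sub_nonpos.2 (Fw_mono hw0 hcase))
        rw [e4, hKN, min_eq_right hcase]
        ring
    have := hsum.trans hpair
    rw [Finset.sum_sub_distrib] at this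
    linarith
  -- bound for the cardinality of D
  have hcle : (i0 : ℕ) + 1 + c ≤ KN := by
    have hcard : c ≤ KN - (i0 : ℕ) - 1 := by
      rw [hc, ← Nat.card_Ioo]
      rcases le_total ((a : Fin N) : ℕ) ((j : Fin N) : ℕ) with hcase | hcase
      · refine Finset.card_le_card_of_injOn (fun x => ((σ x : Fin N) : ℕ)) ?_ ?_
        · intro x hx
          rw [hD] at hx
          simp only [Finset.mem_coe, Finset.mem_filter, Finset.mem_univ, true_and] at hx
          obtain ⟨h1, h2, h3⟩ := hx
          rw [Finset.mem_coe, Finset.mem_Ioo, hKN, min_eq_left hcase]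
          exact ⟨hbig x h1 (ne_of_lt h2), h3⟩
        · intro x _ y _ hxy
          exact σ.injective (Fin.val_injective hxy)
      · refine Finset.card_le_card_of_injOn (fun x => ((x : Fin N) : ℕ)) ?_ ?_
        · intro x hx
          rw [hD] at hx
          simp only [Finset.mem_coe, Finset.mem_filter, Finset.mem_univ, true_and] at hx
          obtain ⟨h1, h2, h3⟩ := hx
          rw [Finset.mem_coe, Finset.mem_Ioo, hKN, min_eq_right hcase]
          exact ⟨h1, h2⟩
        · intro x _ y _ hxy
          exact Fin.val_injective hxy
    omega
  -- bound for the sum over D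
  have h6b : (∑ i ∈ D, w (minv σ i)) ≤ Fw w KN - Fw w (i0 : ℕ) := by
    have hIco : ∑ t ∈ Finset.Ico (i0 : ℕ) (KN - 1), w t ≤ Fw w KN - Fw w (i0 : ℕ) := by
      rw [Fw_sub w (le_of_lt hKi0)]
      apply Finset.sum_le_sum_of_subset_of_nonneg
      · exact Finset.Ico_subset_Ico le_rfl (by omega)
      · intro t _ _
        exact hw0 t
    refine le_trans ?_ hIco
    rcases le_total ((a : Fin N) : ℕ) ((j : Fin N) : ℕ) with hcase | hcase
    · -- use x ↦ σ x - 1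
      have hm_le : ∀ x ∈ D, minv σ x ≤ ((σ x : Fin N) : ℕ) - 1 := by
        intro x hx
        rw [hD] at hx
        simp only [Finset.mem_filter, Finset.mem_univ, true_and] at hx
        obtain ⟨h1, h2, h3⟩ := hx
        have hmem : i0 ∈ Finset.univ.filter fun u => u < σ x := by
          simp only [Finset.mem_filter, Finset.mem_univ, true_and]
          exact hbig x h1 (ne_of_lt h2)
        have hcard2 : #((Finset.univ.filter fun u => u < σ x).erase i0)
            = ((σ x : Fin N) : ℕ) - 1 := by
          rw [Finset.card_erase_of_mem hmem, card_filter_lt]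
        rw [← hcard2]
        apply Finset.card_le_card_of_injOn (fun l => σ l)
        · intro l hl
          simp only [Finset.mem_coe, Finset.mem_filter, Finset.mem_univ, true_and] at hl ⊢
          refine Finset.mem_erase.2 ⟨?_, ?_⟩
          · intro hcon
            have : l = j := σ.injective (hcon.trans hσj.symm)
            rw [this] at hl
            exact absurd (lt_trans hl.1 h2) (lt_irrefl j)
          · simp only [Finset.mem_filter, Finset.mem_univ, true_and]
            exact hl.2
        · intro p _ q _ hpq
          exact σ.injective hpq
      calc ∑ x ∈ D, w (minv σ x)
          ≤ ∑ x ∈ D, w (((σ x : Fin N) : ℕ) - 1) :=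
            Finset.sum_le_sum fun x hx => hwm (hm_le x hx)
        _ = ∑ t ∈ D.image (fun x => ((σ x : Fin N) : ℕ) - 1), w t := by
            rw [Finset.sum_image]
            intro x hx y hy hxy
            rw [hD] at hx hy
            simp only [Finset.mem_coe, Finset.mem_filter, Finset.mem_univ, true_and] at hx hy
            have h1 : (i0 : ℕ) < ((σ x : Fin N) : ℕ) := hbig x hx.1 (ne_of_lt hx.2.1)
            have h2 : (i0 : ℕ) < ((σ y : Fin N) : ℕ) := hbig y hy.1 (ne_of_lt hy.2.1)
            have : ((σ x : Fin N) : ℕ) = ((σ y : Fin N) : ℕ) := by simp only at hxy; omega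
            exact σ.injective (Fin.val_injective this)
        _ ≤ ∑ t ∈ Finset.Ico (i0 : ℕ) (KN - 1), w t := by
            apply Finset.sum_le_sum_of_subset_of_nonneg
            · intro t ht
              rw [Finset.mem_image] at ht
              obtain ⟨x, hx, rfl⟩ := ht
              rw [hD] at hx
              simp only [Finset.mem_filter, Finset.mem_univ, true_and] at hx
              have h1 : (i0 : ℕ) < ((σ x : Fin N) : ℕ) := hbig x hx.1 (ne_of_lt hx.2.1)
              have h3 : ((σ x : Fin N) : ℕ) < ((a : Fin N) : ℕ) := hx.2.2
              rw [Finset.mem_Ico]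
              constructor
              · omega
              · rw [hKN, min_eq_left hcase]
                omega
            · intro t _ _
              exact hw0 t
    · -- use x ↦ x - 1
      have hm_le : ∀ x ∈ D, minv σ x ≤ ((x : Fin N) : ℕ) - 1 := by
        intro x hx
        rw [hD] at hx
        simp only [Finset.mem_filter, Finset.mem_univ, true_and] at hx
        obtain ⟨h1, h2, h3⟩ := hx
        have hmem : i0 ∈ Finset.univ.filter fun u => u < x := by
          simp only [Finset.mem_filter, Finset.mem_univ, true_and]
          exact h1
        have hcard2 : #((Finset.univ.filter fun u => u < x).erase i0)
            = ((x : Fin N) : ℕ) - 1 := by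
          rw [Finset.card_erase_of_mem hmem, card_filter_lt]
        rw [← hcard2]
        apply Finset.card_le_card_of_injOn (fun l => l)
        · intro l hl
          simp only [Finset.mem_coe, Finset.mem_filter, Finset.mem_univ, true_and] at hl ⊢
          refine Finset.mem_erase.2 ⟨?_, ?_⟩
          · intro hcon
            rw [hcon] at hl
            rw [← ha] at hl
            exact lt_asymm h3 hl.2
          · simp only [Finset.mem_filter, Finset.mem_univ, true_and]
            exact hl.1
        · intro p _ q _ hpq
          exact hpq
      calc ∑ x ∈ D, w (minv σ x)
          ≤ ∑ x ∈ D, w (((x : Fin N) : ℕ) - 1) :=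
            Finset.sum_le_sum fun x hx => hwm (hm_le x hx)
        _ = ∑ t ∈ D.image (fun x => ((x : Fin N) : ℕ) - 1), w t := by
            rw [Finset.sum_image]
            intro x hx y hy hxy
            rw [hD] at hx hy
            simp only [Finset.mem_coe, Finset.mem_filter, Finset.mem_univ, true_and] at hx hy
            have h1 : (i0 : ℕ) < ((x : Fin N) : ℕ) := hx.1
            have h2 : (i0 : ℕ) < ((y : Fin N) : ℕ) := hy.1
            have : ((x : Fin N) : ℕ) = ((y : Fin N) : ℕ) := by simp only at hxy; omega
            exact Fin.val_injective this
        _ ≤ ∑ t ∈ Finset.Ico (i0 : ℕ) (KN - 1), w t := by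
            apply Finset.sum_le_sum_of_subset_of_nonneg
            · intro t ht
              rw [Finset.mem_image] at ht
              obtain ⟨x, hx, rfl⟩ := ht
              rw [hD] at hx
              simp only [Finset.mem_filter, Finset.mem_univ, true_and] at hx
              have h1 : (i0 : ℕ) < ((x : Fin N) : ℕ) := hx.1
              have h2 : ((x : Fin N) : ℕ) < ((j : Fin N) : ℕ) := hx.2.1
              rw [Finset.mem_Ico]
              constructor
              · omega
              · rw [hKN, min_eq_right hcase]
                omega
            · intro t _ _
              exact hw0 t
  -- conclusion
  have h6a : Fw w ((i0 : ℕ) + 1 + c) - Fw w (i0 : ℕ) ≤ Fw w KN - Fw w (i0 : ℕ) :=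
    sub_le_sub_right (Fw_mono hw0 hcle) _
  have hIH := IH σ' hless
  have hL : ∑ i : Fin N, (Fw w (i : ℕ) - Fw w (minv σ i))
      = (∑ i : Fin N, (Fw w (i : ℕ) - Fw w (minv σ' i)))
        + ((∑ i ∈ D, w (minv σ i)) + (Fw w ((i0 : ℕ) + 1 + c) - Fw w (i0 : ℕ))) := by
    rw [← key1, Finset.sum_sub_distrib, Finset.sum_sub_distrib, Finset.sum_sub_distrib]
    ring
  rw [hL, key2] at *
  rw [key2] at hIH
  linarith


end Step


lemma core_of_id (w : ℕ → ℤ) (hw0 : ∀ t, 0 ≤ w t) {N : ℕ} (σ : Equiv.Perm (Fin N))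
    (hid : ∀ i, σ i = i) :
    ∑ i : Fin N, (Fw w (i : ℕ) - Fw w (minv σ i)) ≤
      2 * ∑ i : Fin N, max (Fw w (i : ℕ) - Fw w ((σ i : Fin N) : ℕ)) 0 := by
  have hm : ∀ i, minv σ i = (i : ℕ) := by
    intro i
    unfold minv
    rw [show (Finset.univ.filter fun l => l < i ∧ σ l < σ i)
        = Finset.univ.filter fun l => l < i from by
      ext l; simp [hid]]
    exact card_filter_lt i
  have h1 : ∑ i : Fin N, (Fw w (i : ℕ) - Fw w (minv σ i)) = 0 := by
    apply Finset.sum_eq_zero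
    intro i _
    rw [hm i]; ring
  rw [h1]
  have : (0:ℤ) ≤ ∑ i : Fin N, max (Fw w (i : ℕ) - Fw w ((σ i : Fin N) : ℕ)) 0 :=
    Finset.sum_nonneg fun i _ => le_max_right _ _
  linarith

lemma core_aux (w : ℕ → ℤ) (hw0 : ∀ t, 0 ≤ w t) (hwm : Monotone w) :
    ∀ (K : ℕ) {N : ℕ} (σ : Equiv.Perm (Fin N)),
      #(Finset.univ.filter fun i => σ i ≠ i) ≤ K →
      ∑ i : Fin N, (Fw w (i : ℕ) - Fw w (minv σ i)) ≤
        2 * ∑ i : Fin N, max (Fw w (i : ℕ) - Fw w ((σ i : Fin N) : ℕ)) 0 := by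
  intro K
  induction K with
  | zero =>
    intro N σ h
    refine core_of_id w hw0 σ ?_
    intro i
    by_contra hi
    have hmem : i ∈ Finset.univ.filter fun i => σ i ≠ i := by simp [hi]
    have := Finset.card_pos.2 ⟨i, hmem⟩
    omega
  | succ K ih =>
    intro N σ h
    by_cases hid : ∀ i, σ i = i
    · exact core_of_id w hw0 σ hid
    · push_neg at hid
      have hne : (Finset.univ.filter fun i => σ i ≠ i).Nonempty := by
        obtain ⟨i, hi⟩ := hid
        exact ⟨i, by simp [hi]⟩
      set i0 := (Finset.univ.filter fun i => σ i ≠ i).min' hne with hi0def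
      have hi0 : σ i0 ≠ i0 :=
        (Finset.mem_filter.1 ((Finset.univ.filter fun i => σ i ≠ i).min'_mem hne)).2
      have hfix : ∀ k, k < i0 → σ k = k := by
        intro k hk
        by_contra hk2
        have : i0 ≤ k := Finset.min'_le _ k (by simp [hk2])
        exact absurd hk (not_lt.2 this)
      refine step_main w hw0 hwm σ i0 hfix hi0 ?_
      intro τ hτ
      exact ih τ (by omega)

lemma core (w : ℕ → ℤ) (hw0 : ∀ t, 0 ≤ w t) (hwm : Monotone w) {N : ℕ}
    (σ : Equiv.Perm (Fin N)) :
    ∑ i : Fin N, (Fw w (i : ℕ) - Fw w (minv σ i)) ≤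
      2 * ∑ i : Fin N, max (Fw w (i : ℕ) - Fw w ((σ i : Fin N) : ℕ)) 0 :=
  core_aux w hw0 hwm _ σ le_rfl

/-! ### application lemmas -/

section App

variable {n r : ℕ}

def isMax (τ : Equiv.Perm (Fin n)) (S : Finset (Fin n)) (v : Fin n) : Prop :=
  v ∈ S ∧ ∀ u ∈ S, u ≠ v → τ u < τ v

lemma isMax_unique {τ : Equiv.Perm (Fin n)} {S : Finset (Fin n)} {v u : Fin n}
    (h1 : isMax τ S v) (h2 : isMax τ S u) : v = u := by
  by_contra hne
  exact absurd (h2.2 v h1.1 hne) (lt_asymm (h1.2 u h2.1 fun h => hne h.symm))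

lemma isMax_exists (τ : Equiv.Perm (Fin n)) {S : Finset (Fin n)} (h : S.Nonempty) :
    ∃ v, isMax τ S v := by
  obtain ⟨v, hv, hmax⟩ := Finset.exists_max_image S τ h
  exact ⟨v, hv, fun u hu hne => lt_of_le_of_ne (hmax u hu) fun he => hne (τ.injective he)⟩

lemma count_filter_max (hr : 1 ≤ r) (v : Fin n) (Dv : Finset (Fin n)) (hv : v ∉ Dv) :
    #((Finset.powersetCard r (Finset.univ : Finset (Fin n))).filter
      fun S => v ∈ S ∧ ∀ u ∈ S, u ≠ v → u ∈ Dv) = (#Dv).choose (r - 1) := by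
  rw [← Finset.card_powersetCard (r - 1) Dv]
  refine Finset.card_nbij' (fun S => S.erase v) (fun T => insert v T) ?_ ?_ ?_ ?_
  · intro S hS
    rw [Finset.mem_coe, Finset.mem_filter, Finset.mem_powersetCard_univ] at hS
    obtain ⟨hcard, hvS, hsub⟩ := hS
    rw [Finset.mem_coe, Finset.mem_powersetCard]
    constructor
    · intro u hu
      rw [Finset.mem_erase] at hu
      exact hsub u hu.2 hu.1
    · rw [Finset.card_erase_of_mem hvS, hcard]
  · intro T hT
    rw [Finset.mem_coe, Finset.mem_powersetCard] at hT
    obtain ⟨hsub, hcard⟩ := hT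
    have hvT : v ∉ T := fun h => hv (hsub h)
    rw [Finset.mem_coe, Finset.mem_filter, Finset.mem_powersetCard_univ]
    refine ⟨?_, Finset.mem_insert_self _ _, ?_⟩
    · rw [Finset.card_insert_of_notMem hvT, hcard]
      omega
    · intro u hu hne
      exact hsub (Finset.mem_of_mem_insert_of_ne hu hne)
  · intro S hS
    rw [Finset.mem_coe, Finset.mem_filter] at hS
    exact Finset.insert_erase hS.2.1
  · intro T hT
    rw [Finset.mem_coe, Finset.mem_powersetCard] at hT
    exact Finset.erase_insert fun h => hv (hT.1 h)

lemma card_perm_lt (τ : Equiv.Perm (Fin n)) (v : Fin n) :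
    #(Finset.univ.filter fun u => τ u < τ v) = ((τ v : Fin n) : ℕ) := by
  rw [← card_filter_lt (τ v)]
  refine Finset.card_nbij (fun u => τ u) ?_ ?_ ?_
  · intro u hu
    rw [Finset.mem_coe, Finset.mem_filter] at hu ⊢
    exact ⟨Finset.mem_univ _, hu.2⟩
  · exact fun p _ q _ h => τ.injective h
  · intro x hx
    rw [Finset.mem_coe, Finset.mem_filter] at hx
    refine ⟨τ.symm x, ?_, ?_⟩
    · rw [Finset.mem_coe, Finset.mem_filter, Equiv.apply_symm_apply]
      exact ⟨Finset.mem_univ _, hx.2⟩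
    · exact Equiv.apply_symm_apply τ x

lemma card_isMax (hr : 1 ≤ r) (τ : Equiv.Perm (Fin n)) (v : Fin n) :
    #((Finset.powersetCard r (Finset.univ : Finset (Fin n))).filter
      fun S => isMax τ S v) = ((τ v : Fin n) : ℕ).choose (r - 1) := by
  rw [← card_perm_lt τ v,
    ← count_filter_max hr v (Finset.univ.filter fun u => τ u < τ v) (by simp)]
  congr 1
  apply Finset.filter_congr
  intro S _
  unfold isMax
  constructor
  · rintro ⟨h1, h2⟩
    exact ⟨h1, fun u hu hne => by
      rw [Finset.mem_filter]; exact ⟨Finset.mem_univ _, h2 u hu hne⟩⟩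
  · rintro ⟨h1, h2⟩
    exact ⟨h1, fun u hu hne => (Finset.mem_filter.1 (h2 u hu hne)).2⟩

lemma card_isMax_pair (hr : 1 ≤ r) (ρ γ : Equiv.Perm (Fin n)) (v : Fin n) :
    #((Finset.powersetCard r (Finset.univ : Finset (Fin n))).filter
      fun S => isMax ρ S v ∧ isMax γ S v)
    = (#(Finset.univ.filter fun u => ρ u < ρ v ∧ γ u < γ v)).choose (r - 1) := by
  rw [← count_filter_max hr v (Finset.univ.filter fun u => ρ u < ρ v ∧ γ u < γ v)
    (by simp)]
  congr 1
  apply Finset.filter_congr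
  intro S _
  unfold isMax
  constructor
  · rintro ⟨⟨h1, h2⟩, ⟨h3, h4⟩⟩
    exact ⟨h1, fun u hu hne => by
      rw [Finset.mem_filter]
      exact ⟨Finset.mem_univ _, h2 u hu hne, h4 u hu hne⟩⟩
  · rintro ⟨h1, h2⟩
    refine ⟨⟨h1, fun u hu hne => ?_⟩, ⟨h1, fun u hu hne => ?_⟩⟩
    · exact (Finset.mem_filter.1 (h2 u hu hne)).2.1
    · exact (Finset.mem_filter.1 (h2 u hu hne)).2.2

lemma minv_perm (ρ γ : Equiv.Perm (Fin n)) (v : Fin n) :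
    minv (ρ.symm.trans γ) (ρ v)
      = #(Finset.univ.filter fun u => ρ u < ρ v ∧ γ u < γ v) := by
  unfold minv
  refine (Finset.card_nbij (fun u => ρ u) ?_ ?_ ?_).symm
  · intro u hu
    rw [Finset.mem_coe, Finset.mem_filter] at hu ⊢
    refine ⟨Finset.mem_univ _, hu.2.1, ?_⟩
    simp only [Equiv.trans_apply, Equiv.symm_apply_apply]
    exact hu.2.2
  · exact fun p _ q _ h => ρ.injective h
  · intro x hx
    rw [Finset.mem_coe, Finset.mem_filter] at hx
    refine ⟨ρ.symm x, ?_, Equiv.apply_symm_apply ρ x⟩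
    rw [Finset.mem_coe, Finset.mem_filter, Equiv.apply_symm_apply]
    refine ⟨Finset.mem_univ _, hx.2.1, ?_⟩
    have := hx.2.2
    simp only [Equiv.trans_apply, Equiv.symm_apply_apply] at this
    exact this

end App


end RFastAux

open Finset RFastAux in
/-- For any two rankings `ρ, γ` of a dense `r`-FAST instance,
`Σ_v |l_ρ(v) − l_γ(v)| ≥ |b_ρ − b_γ|`. -/
theorem sum_lCount_diff_ge_bad_diff
    {n r : ℕ} (hr : 2 ≤ r)
    (sel : Finset (Fin n) → Fin n)
    (hsel : ∀ S : Finset (Fin n), S.card = r → sel S ∈ S)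
    (ρ γ : Equiv.Perm (Fin n)) :
    |(badCount n r sel ρ : ℤ) - (badCount n r sel γ : ℤ)| ≤
      ∑ v : Fin n, |(lCount n r ρ v : ℤ) - (lCount n r γ v : ℤ)| := by
  classical
  have hr1 : 1 ≤ r := by omega
  -- the weight function and its partial sums
  set w : ℕ → ℤ := fun t => ((t.choose (r - 2) : ℕ) : ℤ) with hw
  set f : ℕ → ℤ := fun x => ((x.choose (r - 1) : ℕ) : ℤ) with hf
  have hw0 : ∀ t, 0 ≤ w t := by
    intro t
    show (0:ℤ) ≤ ((t.choose (r - 2) : ℕ) : ℤ)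
    exact_mod_cast Nat.zero_le _
  have hwm : Monotone w := by
    intro s t hst
    show ((s.choose (r - 2) : ℕ) : ℤ) ≤ ((t.choose (r - 2) : ℕ) : ℤ)
    exact_mod_cast Nat.choose_le_choose _ hst
  have hFw : ∀ x : ℕ, Fw w x = f x := by
    intro x
    induction x with
    | zero =>
      show Fw w 0 = ((Nat.choose 0 (r - 1) : ℕ) : ℤ)
      rw [Nat.choose_eq_zero_of_lt (by omega : 0 < r - 1)]
      simp [Fw]
    | succ x ihx =>
      rw [Fw_succ, ihx]
      show ((x.choose (r - 1) : ℕ) : ℤ) + ((x.choose (r - 2) : ℕ) : ℤ)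
        = (((x+1).choose (r - 1) : ℕ) : ℤ)
      have hr2 : r - 1 = (r - 2) + 1 := by omega
      rw [hr2, Nat.choose_succ_succ' x (r - 2)]
      push_cast
      ring
  -- fastSat vs isMax
  have hsat : ∀ (τ : Equiv.Perm (Fin n)) (S : Finset (Fin n)),
      S ∈ Finset.powersetCard r (Finset.univ : Finset (Fin n)) →
      (fastSat sel S τ ↔ isMax τ S (sel S)) := by
    intro τ S hS
    rw [Finset.mem_powersetCard_univ] at hS
    exact ⟨fun h => ⟨hsel S hS, h⟩, fun h => h.2⟩
  have hne : ∀ S ∈ Finset.powersetCard r (Finset.univ : Finset (Fin n)), S.Nonempty := by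
    intro S hS
    rw [Finset.mem_powersetCard_univ] at hS
    rw [← Finset.card_pos, hS]
    omega
  -- badCount as a filter cardinality
  have hbad : ∀ τ : Equiv.Perm (Fin n),
      badCount n r sel τ
        = #((Finset.powersetCard r (Finset.univ : Finset (Fin n))).filter
            fun S => ¬ fastSat sel S τ) := by
    intro τ
    have hset : {S : Finset (Fin n) | S.card = r ∧ ¬ fastSat sel S τ}
        = ↑((Finset.powersetCard r (Finset.univ : Finset (Fin n))).filter
            fun S => ¬ fastSat sel S τ) := by
      ext S
      simp only [Set.mem_setOf_eq, Finset.mem_coe, Finset.mem_filter,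
        Finset.mem_powersetCard_univ]
    unfold badCount
    rw [hset, Set.ncard_coe_finset]
  -- lCount explicitly
  have hlv : ∀ (τ : Equiv.Perm (Fin n)) (v : Fin n),
      (lCount n r τ v : ℤ) = f ((τ v : Fin n) : ℕ) := by
    intro τ v
    have hset : {S : Finset (Fin n) | S.card = r ∧ v ∈ S ∧ ∀ u ∈ S, u ≠ v → τ u < τ v}
        = ↑((Finset.powersetCard r (Finset.univ : Finset (Fin n))).filter
            fun S => isMax τ S v) := by
      ext S
      simp only [Set.mem_setOf_eq, Finset.mem_coe, Finset.mem_filter,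
        Finset.mem_powersetCard_univ]
      unfold isMax
      tauto
    have h2 : lCount n r τ v = ((τ v : Fin n) : ℕ).choose (r - 1) := by
      unfold lCount
      rw [hset, Set.ncard_coe_finset, card_isMax hr1 τ v]
    rw [h2]
  -- the satisfied-constraint sets
  have hbadZ : ∀ τ : Equiv.Perm (Fin n),
      (badCount n r sel τ : ℤ)
        = (#(Finset.powersetCard r (Finset.univ : Finset (Fin n))) : ℤ)
          - (#((Finset.powersetCard r (Finset.univ : Finset (Fin n))).filter
              fun S => fastSat sel S τ) : ℤ) := by
    intro τ
    have hh := Finset.card_filter_add_card_filter_not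
      (s := Finset.powersetCard r (Finset.univ : Finset (Fin n)))
      (p := fun S => fastSat sel S τ)
    rw [hbad τ]
    have hh2 : ((#((Finset.powersetCard r (Finset.univ : Finset (Fin n))).filter
        fun S => fastSat sel S τ) : ℤ))
        + (#((Finset.powersetCard r (Finset.univ : Finset (Fin n))).filter
            fun S => ¬ fastSat sel S τ) : ℤ)
        = (#(Finset.powersetCard r (Finset.univ : Finset (Fin n))) : ℤ) := by
      exact_mod_cast hh
    linarith
  -- the discrepancy set
  have hsub1 : ((Finset.powersetCard r (Finset.univ : Finset (Fin n))).filter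
        fun S => fastSat sel S γ)
      ⊆ ((Finset.powersetCard r (Finset.univ : Finset (Fin n))).filter
          fun S => fastSat sel S ρ)
        ∪ ((Finset.powersetCard r (Finset.univ : Finset (Fin n))).filter
            fun S => ∃ v, isMax ρ S v ∧ ¬ isMax γ S v) := by
    intro S hS
    rw [Finset.mem_filter] at hS
    by_cases h : fastSat sel S ρ
    · exact Finset.mem_union_left _ (Finset.mem_filter.2 ⟨hS.1, h⟩)
    · refine Finset.mem_union_right _ (Finset.mem_filter.2 ⟨hS.1, ?_⟩)
      obtain ⟨v, hv⟩ := isMax_exists ρ (hne S hS.1)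
      refine ⟨v, hv, fun hcon => h ?_⟩
      have hveq : v = sel S := isMax_unique hcon ((hsat γ S hS.1).1 hS.2)
      exact (hsat ρ S hS.1).2 (hveq ▸ hv)
  have hsub2 : ((Finset.powersetCard r (Finset.univ : Finset (Fin n))).filter
        fun S => fastSat sel S ρ)
      ⊆ ((Finset.powersetCard r (Finset.univ : Finset (Fin n))).filter
          fun S => fastSat sel S γ)
        ∪ ((Finset.powersetCard r (Finset.univ : Finset (Fin n))).filter
            fun S => ∃ v, isMax ρ S v ∧ ¬ isMax γ S v) := by
    intro S hS
    rw [Finset.mem_filter] at hS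
    by_cases h : fastSat sel S γ
    · exact Finset.mem_union_left _ (Finset.mem_filter.2 ⟨hS.1, h⟩)
    · refine Finset.mem_union_right _ (Finset.mem_filter.2 ⟨hS.1, ?_⟩)
      exact ⟨sel S, (hsat ρ S hS.1).1 hS.2, fun hcon => h ((hsat γ S hS.1).2 hcon)⟩
  have hc1 := le_trans (Finset.card_le_card hsub1) (Finset.card_union_le _ _)
  have hc2 := le_trans (Finset.card_le_card hsub2) (Finset.card_union_le _ _)
  -- fibered count of the discrepancy set
  have hDcard : #((Finset.powersetCard r (Finset.univ : Finset (Fin n))).filter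
        fun S => ∃ v, isMax ρ S v ∧ ¬ isMax γ S v)
      = ∑ v : Fin n,
          #((Finset.powersetCard r (Finset.univ : Finset (Fin n))).filter
            fun S => isMax ρ S v ∧ ¬ isMax γ S v) := by
    have hbi : ((Finset.powersetCard r (Finset.univ : Finset (Fin n))).filter
          fun S => ∃ v, isMax ρ S v ∧ ¬ isMax γ S v)
        = Finset.univ.biUnion (fun v : Fin n =>
            (Finset.powersetCard r (Finset.univ : Finset (Fin n))).filter
              fun S => isMax ρ S v ∧ ¬ isMax γ S v) := by
      ext S
      simp only [Finset.mem_biUnion, Finset.mem_univ, true_and, Finset.mem_filter]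
      tauto
    rw [hbi]
    apply Finset.card_biUnion
    intro x _ y _ hxy
    rw [Function.onFun, Finset.disjoint_left]
    intro S hSx hSy
    rw [Finset.mem_filter] at hSx hSy
    exact hxy (isMax_unique hSx.2.1 hSy.2.1)
  have hfibval : ∀ v : Fin n,
      (#((Finset.powersetCard r (Finset.univ : Finset (Fin n))).filter
          fun S => isMax ρ S v ∧ ¬ isMax γ S v) : ℤ)
        = f ((ρ v : Fin n) : ℕ)
          - f (#(Finset.univ.filter fun u => ρ u < ρ v ∧ γ u < γ v)) := by
    intro v
    have hsplit := Finset.card_filter_add_card_filter_not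
      (s := (Finset.powersetCard r (Finset.univ : Finset (Fin n))).filter
        fun S => isMax ρ S v)
      (p := fun S => isMax γ S v)
    rw [Finset.filter_filter, Finset.filter_filter] at hsplit
    rw [card_isMax hr1 ρ v] at hsplit
    have hpair := card_isMax_pair hr1 ρ γ v
    rw [hpair] at hsplit
    have : (((Finset.univ.filter fun u => ρ u < ρ v ∧ γ u < γ v)).card.choose (r-1) : ℤ)
        + (#((Finset.powersetCard r (Finset.univ : Finset (Fin n))).filter
            fun S => isMax ρ S v ∧ ¬ isMax γ S v) : ℤ)
        = (((ρ v : Fin n) : ℕ).choose (r-1) : ℤ) := by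
      exact_mod_cast hsplit
    show _ = ((((ρ v : Fin n) : ℕ).choose (r-1) : ℕ) : ℤ)
      - (((#(Finset.univ.filter fun u => ρ u < ρ v ∧ γ u < γ v)).choose (r-1) : ℕ) : ℤ)
    linarith
  -- apply the core inequality
  set σp : Equiv.Perm (Fin n) := ρ.symm.trans γ with hσp
  have hcore := core w hw0 hwm σp
  have hminv : ∀ v : Fin n, minv σp (ρ v)
      = #(Finset.univ.filter fun u => ρ u < ρ v ∧ γ u < γ v) := by
    intro v
    rw [hσp]
    exact minv_perm ρ γ v
  have hσpρ : ∀ v : Fin n, σp (ρ v) = γ v := by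
    intro v
    rw [hσp]
    simp [Equiv.trans_apply]
  -- reindex the LHS of the core inequality
  have hre1 : ∑ i : Fin n, (Fw w (i : ℕ) - Fw w (minv σp i))
      = ∑ v : Fin n, (f ((ρ v : Fin n) : ℕ)
          - f (#(Finset.univ.filter fun u => ρ u < ρ v ∧ γ u < γ v))) := by
    rw [← Equiv.sum_comp ρ (fun i : Fin n => Fw w (i : ℕ) - Fw w (minv σp i))]
    apply Finset.sum_congr rfl
    intro v _
    rw [hminv v, hFw, hFw]
  -- reindex the RHS
  have hre2 : ∑ i : Fin n, |Fw w (i : ℕ) - Fw w ((σp i : Fin n) : ℕ)|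
      = ∑ v : Fin n, |f ((ρ v : Fin n) : ℕ) - f ((γ v : Fin n) : ℕ)| := by
    rw [← Equiv.sum_comp ρ
      (fun i : Fin n => |Fw w (i : ℕ) - Fw w ((σp i : Fin n) : ℕ)|)]
    apply Finset.sum_congr rfl
    intro v _
    rw [hσpρ v, hFw, hFw]
  -- turn 2 * max into abs
  have habs : ∀ x : ℤ, 2 * max x 0 = |x| + x := by
    intro x
    rcases le_total 0 x with h | h
    · rw [max_eq_left h, abs_of_nonneg h]; ring
    · rw [max_eq_right h, abs_of_nonpos h]; ring
  have hzero : ∑ i : Fin n, (Fw w (i : ℕ) - Fw w ((σp i : Fin n) : ℕ)) = 0 := by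
    rw [Finset.sum_sub_distrib,
      Equiv.sum_comp σp (fun i : Fin n => Fw w (i : ℕ))]
    ring
  have hmaxabs : 2 * ∑ i : Fin n, max (Fw w (i : ℕ) - Fw w ((σp i : Fin n) : ℕ)) 0
      = ∑ i : Fin n, |Fw w (i : ℕ) - Fw w ((σp i : Fin n) : ℕ)| := by
    rw [Finset.mul_sum]
    rw [Finset.sum_congr rfl fun (i : Fin n) _ =>
      habs (Fw w (i : ℕ) - Fw w ((σp i : Fin n) : ℕ))]
    rw [Finset.sum_add_distrib, hzero, add_zero]
  -- put the chain together
  have hchain : (#((Finset.powersetCard r (Finset.univ : Finset (Fin n))).filter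
        fun S => ∃ v, isMax ρ S v ∧ ¬ isMax γ S v) : ℤ)
      ≤ ∑ v : Fin n, |(lCount n r ρ v : ℤ) - (lCount n r γ v : ℤ)| := by
    calc (#((Finset.powersetCard r (Finset.univ : Finset (Fin n))).filter
          fun S => ∃ v, isMax ρ S v ∧ ¬ isMax γ S v) : ℤ)
        = ∑ v : Fin n, (f ((ρ v : Fin n) : ℕ)
            - f (#(Finset.univ.filter fun u => ρ u < ρ v ∧ γ u < γ v))) := by
          rw [hDcard]
          push_cast
          exact Finset.sum_congr rfl fun v _ => hfibval v
      _ = ∑ i : Fin n, (Fw w (i : ℕ) - Fw w (minv σp i)) := hre1.symm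
      _ ≤ 2 * ∑ i : Fin n, max (Fw w (i : ℕ) - Fw w ((σp i : Fin n) : ℕ)) 0 := hcore
      _ = ∑ i : Fin n, |Fw w (i : ℕ) - Fw w ((σp i : Fin n) : ℕ)| := hmaxabs
      _ = ∑ v : Fin n, |f ((ρ v : Fin n) : ℕ) - f ((γ v : Fin n) : ℕ)| := hre2
      _ = ∑ v : Fin n, |(lCount n r ρ v : ℤ) - (lCount n r γ v : ℤ)| := by
          apply Finset.sum_congr rfl
          intro v _
          rw [hlv ρ v, hlv γ v]
  -- finish with the two subset bounds
  rw [hbadZ ρ, hbadZ γ]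
  rw [abs_le]
  constructor
  · have := hc1
    have hcast : (#((Finset.powersetCard r (Finset.univ : Finset (Fin n))).filter
          fun S => fastSat sel S γ) : ℤ)
        ≤ (#((Finset.powersetCard r (Finset.univ : Finset (Fin n))).filter
            fun S => fastSat sel S ρ) : ℤ)
          + (#((Finset.powersetCard r (Finset.univ : Finset (Fin n))).filter
              fun S => ∃ v, isMax ρ S v ∧ ¬ isMax γ S v) : ℤ) := by
      exact_mod_cast hc1
    linarith
  · have hcast : (#((Finset.powersetCard r (Finset.univ : Finset (Fin n))).filter
          fun S => fastSat sel S ρ) : ℤ)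
        ≤ (#((Finset.powersetCard r (Finset.univ : Finset (Fin n))).filter
            fun S => fastSat sel S γ) : ℤ)
          + (#((Finset.powersetCard r (Finset.univ : Finset (Fin n))).filter
              fun S => ∃ v, isMax ρ S v ∧ ¬ isMax γ S v) : ℤ) := by
      exact_mod_cast hc2
    linarith
end

section
/- For rankings ρ, γ of V = {1,…,n} and any r ≥ 2, Σ_{v∈V} |C(ρ(v)−1, r−1) − C(γ(v)−1, r−1)| ≥ K(ρ, γ), where K(ρ, γ) is the number of r-subsets S of V such that S is satisfied by exactly one of ρ and γ in a dense r-Dense Feedback Arc Set instance. -/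
open Finset

namespace SCDGK

variable {n : ℕ}

def eS (σ : Equiv.Perm (Fin n)) (t : Fin n) : ℕ :=
  (Finset.univ.filter fun s => s < t ∧ σ s < σ t).card

lemma eS_le (σ : Equiv.Perm (Fin n)) (t : Fin n) : eS σ t ≤ (t : ℕ) := by
  have h : (Finset.univ.filter fun s => s < t ∧ σ s < σ t) ⊆ Finset.Iio t := by
    intro s hs; simp only [mem_filter] at hs; simpa using hs.2.1
  simpa [eS, Fin.card_Iio] using Finset.card_le_card h

lemma telescope (f : ℕ → ℤ) {a b : ℕ} (hab : a ≤ b) :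
    ∑ k ∈ Finset.Ico a b, (f (k+1) - f k) = f b - f a := by
  induction b, hab using Nat.le_induction with
  | base => simp
  | succ b hab ih => rw [Finset.sum_Ico_succ_top hab, ih]; ring

lemma shiftIneq (f : ℕ → ℤ)
    (hconv : ∀ a b : ℕ, a ≤ b → f (a+1) - f a ≤ f (b+1) - f b)
    (d : ℕ) : ∀ a b : ℕ, a ≤ b → f (a + d) - f a ≤ f (b + d) - f b := by
  induction d with
  | zero => intro a b _; simp
  | succ d ih =>
      intro a b hab
      have h1 := ih a b hab
      have h2 := hconv (a + d) (b + d) (by omega)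
      have e1 : a + (d+1) = (a + d) + 1 := by omega
      have e2 : b + (d+1) = (b + d) + 1 := by omega
      rw [e1, e2]; linarith

lemma core (f : ℕ → ℤ) (hmono : ∀ a b : ℕ, a ≤ b → f a ≤ f b)
    (hconv : ∀ a b : ℕ, a ≤ b → f (a+1) - f a ≤ f (b+1) - f b) :
    ∀ (k : ℕ) (σ : Equiv.Perm (Fin n)),
      (∑ t : Fin n, (t : ℕ)) - (∑ t : Fin n, eS σ t) ≤ k →
      ∑ t : Fin n, (f t - f (eS σ t)) ≤ ∑ t : Fin n, |f (σ t) - f t| := by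
  intro k
  induction k with
  | zero =>
      intro σ hk
      have hfull : ∀ t : Fin n, eS σ t = (t : ℕ) := by
        have hle : (∑ t : Fin n, eS σ t) ≤ ∑ t : Fin n, (t : ℕ) :=
          Finset.sum_le_sum (fun t _ => eS_le σ t)
        have heq : (∑ t : Fin n, eS σ t) = ∑ t : Fin n, (t : ℕ) := by omega
        intro t
        exact (Finset.sum_eq_sum_iff_of_le (fun t _ => eS_le σ t)).mp heq t (mem_univ t)
      have : ∑ t : Fin n, (f t - f (eS σ t)) = 0 := by
        apply Finset.sum_eq_zero; intro t _; rw [hfull t]; ring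
      rw [this]
      exact Finset.sum_nonneg (fun t _ => abs_nonneg _)
  | succ k ih =>
      intro σ hk
      by_cases hfull : ∀ t : Fin n, eS σ t = (t : ℕ)
      · have : ∑ t : Fin n, (f t - f (eS σ t)) = 0 := by
          apply Finset.sum_eq_zero; intro t _; rw [hfull t]; ring
        rw [this]
        exact Finset.sum_nonneg (fun t _ => abs_nonneg _)
      push_neg at hfull
      obtain ⟨t0, ht0⟩ := hfull
      have ht0' : eS σ t0 < (t0 : ℕ) := lt_of_le_of_ne (eS_le σ t0) ht0
      -- find an inversion
      obtain ⟨s0, hs0I, hs0F⟩ :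
          ∃ s ∈ Finset.Iio t0, s ∉ (Finset.univ.filter fun s => s < t0 ∧ σ s < σ t0) := by
        by_contra h; push_neg at h
        have hsub : Finset.Iio t0 ⊆ (Finset.univ.filter fun s => s < t0 ∧ σ s < σ t0) := h
        have := Finset.card_le_card hsub
        rw [Fin.card_Iio] at this
        exact absurd this (by unfold eS at ht0'; omega)
      have hs0lt : s0 < t0 := Finset.mem_Iio.mp hs0I
      have hinv : σ t0 < σ s0 := by
        simp only [mem_filter, mem_univ, true_and] at hs0F
        have h1 : σ t0 ≤ σ s0 := not_lt.mp (fun hc => hs0F ⟨hs0lt, hc⟩)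
        have h2 : σ t0 ≠ σ s0 := fun hc => absurd (σ.injective hc.symm) (ne_of_lt hs0lt)
        exact lt_of_le_of_ne h1 h2
      -- there is a descent u with σ u < u
      have hexd : ∃ u : Fin n, σ u < u := by
        by_contra h; push_neg at h
        have hsum : ∑ u : Fin n, ((σ u : ℕ)) = ∑ u : Fin n, (u : ℕ) :=
          Equiv.sum_comp σ (fun u => (u : ℕ))
        have hall := (Finset.sum_eq_sum_iff_of_le
          (fun (u : Fin n) (_ : u ∈ Finset.univ) => (Fin.le_def.mp (h u) : (u:ℕ) ≤ ((σ u : Fin n) : ℕ)))).mp hsum.symm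
        have hs := hall s0 (mem_univ s0)
        have ht := hall t0 (mem_univ t0)
        have := Fin.lt_def.mp hs0lt
        have := Fin.lt_def.mp hinv
        omega
      -- j = minimal descent
      have hDne : (Finset.univ.filter fun u : Fin n => σ u < u).Nonempty := by
        obtain ⟨u, hu⟩ := hexd; exact ⟨u, by simp [hu]⟩
      set j0 : Fin n := (Finset.univ.filter fun u : Fin n => σ u < u).min' hDne with hj0def
      have hj0 : σ j0 < j0 := by
        have h : j0 ∈ (Finset.univ.filter fun u : Fin n => σ u < u) :=
          Finset.min'_mem _ hDne
        exact (Finset.mem_filter.mp h).2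
      have hj0min : ∀ u : Fin n, σ u < u → j0 ≤ u := by
        intro u hu; exact Finset.min'_le _ _ (by simp [hu])
      -- pigeonhole: find s with σ j0 ≤ s < j0 and j0 ≤ σ s
      have hpig : ∃ s : Fin n, σ j0 ≤ s ∧ s < j0 ∧ j0 ≤ σ s := by
        by_contra h; push_neg at h
        have hmaps : ∀ s ∈ Finset.Ico (σ j0) j0, σ s ∈ Finset.Ioo (σ j0) j0 := by
          intro s hs
          rw [Finset.mem_Ico] at hs
          rw [Finset.mem_Ioo]
          have h1 : σ s < j0 := h s hs.1 hs.2
          have h2 : s ≤ σ s := not_lt.mp (fun hc => absurd (hj0min s hc) (not_le.mpr hs.2))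
          have h3 : σ s ≠ σ j0 := fun hc => absurd (σ.injective hc) (ne_of_lt hs.2)
          exact ⟨lt_of_le_of_ne (le_trans hs.1 h2) (Ne.symm h3), h1⟩
        have hcard := Finset.card_le_card_of_injOn σ hmaps
          (fun a _ b _ hab => σ.injective hab)
        rw [Fin.card_Ico, Fin.card_Ioo] at hcard
        have := Fin.lt_def.mp hj0
        omega
      obtain ⟨s1, hs1a, hs1b, hs1c⟩ := hpig
      -- minimal-width doubly crossing pair
      set P : Finset (Fin n × Fin n) :=
        Finset.univ.filter (fun p : Fin n × Fin n => p.1 < p.2 ∧ p.2 ≤ σ p.1 ∧ σ p.2 ≤ p.1)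
        with hPdef
      have hPne : P.Nonempty := ⟨(s1, j0), by
        simp only [hPdef, mem_filter, mem_univ, true_and]
        exact ⟨hs1b, hs1c, hs1a⟩⟩
      obtain ⟨p, hpP, hpmin⟩ := Finset.exists_min_image P (fun p => (p.2 : ℕ) - (p.1 : ℕ)) hPne
      obtain ⟨i, jj⟩ := p
      rw [hPdef, Finset.mem_filter] at hpP
      obtain ⟨-, hij, ha, hb⟩ := hpP
      have hijv : (i : ℕ) < (jj : ℕ) := Fin.lt_def.mp hij
      have hav : (jj : ℕ) ≤ ((σ i : Fin n) : ℕ) := Fin.le_def.mp ha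
      have hbv : ((σ jj : Fin n) : ℕ) ≤ (i : ℕ) := Fin.le_def.mp hb
      have hmid : ∀ t : Fin n, i < t → t < jj → i < σ t ∧ σ t < jj := by
        intro t h1 h2
        constructor
        · by_contra hc; push_neg at hc
          have hmem : (i, t) ∈ P := by
            rw [hPdef, Finset.mem_filter]
            exact ⟨mem_univ _, h1, le_trans (le_of_lt h2) ha, hc⟩
          have := hpmin _ hmem
          have hv1 := Fin.lt_def.mp h1
          have hv2 := Fin.lt_def.mp h2
          simp only at this
          omega
        · by_contra hc; push_neg at hc
          have hmem : (t, jj) ∈ P := by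
            rw [hPdef, Finset.mem_filter]
            exact ⟨mem_univ _, h2, hc, le_trans hb (le_of_lt h1)⟩
          have := hpmin _ hmem
          have hv1 := Fin.lt_def.mp h1
          have hv2 := Fin.lt_def.mp h2
          simp only at this
          omega
      set σ' : Equiv.Perm (Fin n) := σ * Equiv.swap i jj with hσ'def
      have h'i : σ' i = σ jj := by
        rw [hσ'def, Equiv.Perm.mul_apply, Equiv.swap_apply_left]
      have h'j : σ' jj = σ i := by
        rw [hσ'def, Equiv.Perm.mul_apply, Equiv.swap_apply_right]
      have h'o : ∀ t : Fin n, t ≠ i → t ≠ jj → σ' t = σ t := by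
        intro t h1 h2
        rw [hσ'def, Equiv.Perm.mul_apply, Equiv.swap_apply_of_ne_of_ne h1 h2]
      -- e-statistics after the swap
      have hE1 : ∀ t : Fin n, t < i → eS σ' t = eS σ t := by
        intro t ht
        unfold eS
        congr 1
        apply Finset.filter_congr
        intro s _
        by_cases hst : s < t
        · have hsi : s ≠ i := ne_of_lt (lt_trans hst ht)
          have hsj : s ≠ jj := ne_of_lt (lt_trans (lt_trans hst ht) hij)
          have hti : t ≠ i := ne_of_lt ht
          have htj : t ≠ jj := ne_of_lt (lt_trans ht hij)
          simp only [h'o s hsi hsj, h'o t hti htj]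
        · simp [hst]
      have hE2 : ∀ t : Fin n, jj < t → eS σ' t = eS σ t := by
        intro t ht
        have hti : t ≠ i := (ne_of_gt (lt_trans hij ht))
        have htj : t ≠ jj := ne_of_gt ht
        unfold eS
        apply Finset.card_bij' (i := fun s _ => Equiv.swap i jj s)
          (j := fun s _ => Equiv.swap i jj s)
        · intro s hs
          rw [Finset.mem_filter] at hs ⊢
          obtain ⟨-, hst, hσs⟩ := hs
          refine ⟨mem_univ _, ?_, ?_⟩
          · by_cases h1 : s = i
            · subst h1; rw [Equiv.swap_apply_left]; exact ht
            by_cases h2 : s = jj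
            · subst h2; rw [Equiv.swap_apply_right]; exact lt_trans hij ht
            · rw [Equiv.swap_apply_of_ne_of_ne h1 h2]; exact hst
          · have e1 : σ (Equiv.swap i jj s) = σ' s := by
              rw [hσ'def, Equiv.Perm.mul_apply]
            rw [e1]
            rw [h'o t hti htj] at hσs
            exact hσs
        · intro s hs
          rw [Finset.mem_filter] at hs ⊢
          obtain ⟨-, hst, hσs⟩ := hs
          refine ⟨mem_univ _, ?_, ?_⟩
          · by_cases h1 : s = i
            · subst h1; rw [Equiv.swap_apply_left]; exact ht
            by_cases h2 : s = jj
            · subst h2; rw [Equiv.swap_apply_right]; exact lt_trans hij ht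
            · rw [Equiv.swap_apply_of_ne_of_ne h1 h2]; exact hst
          · have h3 : σ' (Equiv.swap i jj s) = σ s := by
              rw [hσ'def, Equiv.Perm.mul_apply, Equiv.swap_apply_self]
            rw [h3, h'o t hti htj]
            exact hσs
        · intro s _; exact Equiv.swap_apply_self _ _ _
        · intro s _; exact Equiv.swap_apply_self _ _ _
      have hE3 : ∀ t : Fin n, i < t → t < jj → eS σ' t = eS σ t + 1 := by
        intro t h1 h2
        have hm := hmid t h1 h2
        have hti : t ≠ i := ne_of_gt h1
        have htj : t ≠ jj := ne_of_lt h2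
        have hset : (Finset.univ.filter fun s => s < t ∧ σ' s < σ' t)
            = insert i (Finset.univ.filter fun s => s < t ∧ σ s < σ t) := by
          ext s
          simp only [mem_filter, mem_univ, true_and, mem_insert]
          constructor
          · rintro ⟨hst, hσs⟩
            by_cases hsi : s = i
            · exact Or.inl hsi
            · right
              have hsj : s ≠ jj := ne_of_lt (lt_trans hst h2)
              rw [h'o s hsi hsj, h'o t hti htj] at hσs
              exact ⟨hst, hσs⟩
          · rintro (rfl | ⟨hst, hσs⟩)
            · refine ⟨h1, ?_⟩
              rw [h'i, h'o t hti htj]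
              exact lt_of_le_of_lt hb hm.1
            · have hsi : s ≠ i := by
                rintro rfl
                exact absurd hσs (not_lt.mpr (le_of_lt (lt_of_lt_of_le hm.2 ha)))
              have hsj : s ≠ jj := ne_of_lt (lt_trans hst h2)
              rw [h'o s hsi hsj, h'o t hti htj]
              exact ⟨hst, hσs⟩
        unfold eS
        rw [hset, Finset.card_insert_of_notMem]
        simp only [mem_filter, mem_univ, true_and, not_and]
        intro _
        exact not_lt.mpr (le_of_lt (lt_of_lt_of_le hm.2 ha))
      have hE4 : eS σ' i = eS σ jj := by
        unfold eS
        congr 1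
        ext s
        simp only [mem_filter, mem_univ, true_and]
        constructor
        · rintro ⟨hsi, hσs⟩
          have hsi' : s ≠ i := ne_of_lt hsi
          have hsj : s ≠ jj := ne_of_lt (lt_trans hsi hij)
          rw [h'o s hsi' hsj, h'i] at hσs
          exact ⟨lt_trans hsi hij, hσs⟩
        · rintro ⟨hsj', hσs⟩
          have hs_ne_i : s ≠ i := by
            rintro rfl
            have hv := Fin.lt_def.mp hσs
            omega
          have hs_lt_i : s < i := by
            by_contra hc; push_neg at hc
            have hlt : i < s := lt_of_le_of_ne hc (Ne.symm hs_ne_i)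
            have := (hmid s hlt hsj').1
            exact absurd hσs (not_lt.mpr (le_of_lt (lt_of_le_of_lt hb this)))
          have hsj : s ≠ jj := ne_of_lt hsj'
          rw [h'o s hs_ne_i hsj, h'i]
          exact ⟨hs_lt_i, hσs⟩
      have hE5 : eS σ' jj = eS σ i + ((jj : ℕ) - (i : ℕ)) := by
        have hset : (Finset.univ.filter fun s => s < jj ∧ σ' s < σ' jj)
            = (Finset.univ.filter fun s => s < i ∧ σ s < σ i) ∪ Finset.Ico i jj := by
          ext s
          simp only [mem_filter, mem_union, mem_univ, true_and, Finset.mem_Ico]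
          rw [h'j]
          constructor
          · rintro ⟨hsj, hσs⟩
            by_cases hsi : s < i
            · left
              refine ⟨hsi, ?_⟩
              rw [h'o s (ne_of_lt hsi) (ne_of_lt hsj)] at hσs
              exact hσs
            · right; exact ⟨not_lt.mp hsi, hsj⟩
          · rintro (⟨hsi, hσs⟩ | ⟨hge, hlt⟩)
            · refine ⟨lt_trans hsi hij, ?_⟩
              rw [h'o s (ne_of_lt hsi) (ne_of_lt (lt_trans hsi hij))]
              exact hσs
            · refine ⟨hlt, ?_⟩
              by_cases hsi : s = i
              · subst hsi
                rw [h'i]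
                exact lt_of_le_of_lt hb (lt_of_lt_of_le hij ha)
              · have hlt' : i < s := lt_of_le_of_ne hge (Ne.symm hsi)
                rw [h'o s hsi (ne_of_lt hlt)]
                exact lt_of_lt_of_le (hmid s hlt' hlt).2 ha
        have hdisj : Disjoint (Finset.univ.filter fun s => s < i ∧ σ s < σ i)
            (Finset.Ico i jj) := by
          rw [Finset.disjoint_left]
          intro s hs hs2
          exact absurd (Finset.mem_Ico.mp hs2).1
            (not_le.mpr (Finset.mem_filter.mp hs).2.1)
        unfold eS
        rw [hset, Finset.card_union_of_disjoint hdisj, Fin.card_Ico]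
      -- splitting the difference sums
      have hjM : jj ∉ Finset.Ioo i jj := by simp
      have hiM : i ∉ insert jj (Finset.Ioo i jj) := by
        simp only [Finset.mem_insert, Finset.mem_Ioo]
        push_neg
        exact ⟨ne_of_lt hij, fun h => absurd h (lt_irrefl i)⟩
      have hsplitgen : ∀ g : Fin n → ℤ, (∀ t : Fin n, t < i → g t = 0) →
          (∀ t : Fin n, jj < t → g t = 0) →
          ∑ t : Fin n, g t = g i + (g jj + ∑ t ∈ Finset.Ioo i jj, g t) := by
        intro g hg1 hg2
        rw [← Finset.sum_insert hjM, ← Finset.sum_insert hiM]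
        apply (Finset.sum_subset (Finset.subset_univ _) _).symm
        intro t _ htS
        simp only [Finset.mem_insert, Finset.mem_Ioo] at htS
        push_neg at htS
        obtain ⟨hti, htj, htm⟩ := htS
        rcases lt_trichotomy t i with h | h | h
        · exact hg1 t h
        · exact absurd h hti
        · rcases lt_trichotomy t jj with h2 | h2 | h2
          · exact absurd h2 (not_lt.mpr (htm h))
          · exact absurd h2 htj
          · exact hg2 t h2
      have hFsplit : ∑ t : Fin n, (f (eS σ' t) - f (eS σ t))
          = (f (eS σ' i) - f (eS σ i)) + ((f (eS σ' jj) - f (eS σ jj))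
            + ∑ t ∈ Finset.Ioo i jj, (f (eS σ' t) - f (eS σ t))) :=
        hsplitgen (fun t => f (eS σ' t) - f (eS σ t))
          (fun t ht => by show f (eS σ' t) - f (eS σ t) = 0; rw [hE1 t ht]; ring)
          (fun t ht => by show f (eS σ' t) - f (eS σ t) = 0; rw [hE2 t ht]; ring)
      have hGsplit : ∑ t : Fin n, (|f ((σ t : Fin n) : ℕ) - f (t : ℕ)| - |f ((σ' t : Fin n) : ℕ) - f (t : ℕ)|)
          = (|f ((σ i : Fin n) : ℕ) - f (i : ℕ)| - |f ((σ' i : Fin n) : ℕ) - f (i : ℕ)|)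
            + ((|f ((σ jj : Fin n) : ℕ) - f (jj : ℕ)| - |f ((σ' jj : Fin n) : ℕ) - f (jj : ℕ)|)
            + ∑ t ∈ Finset.Ioo i jj, (|f ((σ t : Fin n) : ℕ) - f (t : ℕ)| - |f ((σ' t : Fin n) : ℕ) - f (t : ℕ)|)) :=
        hsplitgen (fun t => |f ((σ t : Fin n) : ℕ) - f (t : ℕ)| - |f ((σ' t : Fin n) : ℕ) - f (t : ℕ)|)
          (fun t ht => by
            show |f ((σ t : Fin n) : ℕ) - f (t : ℕ)| - |f ((σ' t : Fin n) : ℕ) - f (t : ℕ)| = 0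
            rw [h'o t (ne_of_lt ht) (ne_of_lt (lt_trans ht hij))]; ring)
          (fun t ht => by
            show |f ((σ t : Fin n) : ℕ) - f (t : ℕ)| - |f ((σ' t : Fin n) : ℕ) - f (t : ℕ)| = 0
            rw [h'o t (ne_of_gt (lt_trans hij ht)) (ne_of_gt ht)]; ring)
      have hGmid : ∀ t ∈ Finset.Ioo i jj,
          |f ((σ t : Fin n) : ℕ) - f (t : ℕ)| - |f ((σ' t : Fin n) : ℕ) - f (t : ℕ)| = 0 := by
        intro t htm
        rw [Finset.mem_Ioo] at htm
        rw [h'o t (ne_of_gt htm.1) (ne_of_lt htm.2)]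
        ring
      -- bound the boundary terms
      have hBound1 : (f (eS σ' i) - f (eS σ i)) + (f (eS σ' jj) - f (eS σ jj))
          ≤ f (jj : ℕ) - f (i : ℕ) := by
        rw [hE4, hE5]
        have hs := shiftIneq f hconv ((jj : ℕ) - (i : ℕ)) (eS σ i) (i : ℕ) (eS_le σ i)
        have heq : (i : ℕ) + ((jj : ℕ) - (i : ℕ)) = (jj : ℕ) := by omega
        rw [heq] at hs
        linarith
      have hBound2 : ∑ t ∈ Finset.Ioo i jj, (f (eS σ' t) - f (eS σ t))
          ≤ f (jj : ℕ) - f (i : ℕ) := by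
        have h1 : ∀ t ∈ Finset.Ioo i jj,
            f (eS σ' t) - f (eS σ t) ≤ f ((t : ℕ) + 1) - f (t : ℕ) := by
          intro t htm
          rw [Finset.mem_Ioo] at htm
          rw [hE3 t htm.1 htm.2]
          exact hconv (eS σ t) (t : ℕ) (eS_le σ t)
        calc ∑ t ∈ Finset.Ioo i jj, (f (eS σ' t) - f (eS σ t))
            ≤ ∑ t ∈ Finset.Ioo i jj, (f ((t : ℕ) + 1) - f (t : ℕ)) := Finset.sum_le_sum h1
          _ = ∑ m ∈ Finset.Ioo (i : ℕ) (jj : ℕ), (f (m + 1) - f m) := by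
              rw [← Fin.map_valEmbedding_Ioo, Finset.sum_map]
              rfl
          _ ≤ ∑ m ∈ Finset.Ico (i : ℕ) (jj : ℕ), (f (m + 1) - f m) := by
              apply Finset.sum_le_sum_of_subset_of_nonneg
              · intro m hm
                rw [Finset.mem_Ioo] at hm
                rw [Finset.mem_Ico]
                omega
              · intro m _ _
                have := hmono m (m + 1) (by omega)
                linarith
          _ = f (jj : ℕ) - f (i : ℕ) := telescope f (le_of_lt hijv)
      -- the G boundary value
      have hGval : (|f ((σ i : Fin n) : ℕ) - f (i : ℕ)| - |f ((σ' i : Fin n) : ℕ) - f (i : ℕ)|)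
          + (|f ((σ jj : Fin n) : ℕ) - f (jj : ℕ)| - |f ((σ' jj : Fin n) : ℕ) - f (jj : ℕ)|)
          = 2 * (f (jj : ℕ) - f (i : ℕ)) := by
        rw [h'i, h'j]
        have m1 : f ((σ jj : Fin n) : ℕ) ≤ f (i : ℕ) := hmono _ _ hbv
        have m2 : f (i : ℕ) ≤ f (jj : ℕ) := hmono _ _ (le_of_lt hijv)
        have m3 : f (jj : ℕ) ≤ f ((σ i : Fin n) : ℕ) := hmono _ _ hav
        rw [abs_of_nonneg (by linarith), abs_of_nonpos (by linarith),
          abs_of_nonpos (by linarith), abs_of_nonneg (by linarith)]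
        ring
      -- measure increases
      have hmeas : (∑ t : Fin n, (eS σ t : ℤ)) + 1 ≤ ∑ t : Fin n, (eS σ' t : ℤ) := by
        have hsplit : ∑ t : Fin n, ((eS σ' t : ℤ) - (eS σ t : ℤ))
            = ((eS σ' i : ℤ) - (eS σ i : ℤ)) + (((eS σ' jj : ℤ) - (eS σ jj : ℤ))
              + ∑ t ∈ Finset.Ioo i jj, ((eS σ' t : ℤ) - (eS σ t : ℤ))) :=
          hsplitgen (fun t => (eS σ' t : ℤ) - (eS σ t : ℤ))
            (fun t ht => by show ((eS σ' t : ℤ) - (eS σ t : ℤ)) = 0; rw [hE1 t ht]; ring)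
            (fun t ht => by show ((eS σ' t : ℤ) - (eS σ t : ℤ)) = 0; rw [hE2 t ht]; ring)
        have hone : ∀ t ∈ Finset.Ioo i jj, ((eS σ' t : ℤ) - (eS σ t : ℤ)) = 1 := by
          intro t htm
          rw [Finset.mem_Ioo] at htm
          rw [hE3 t htm.1 htm.2]
          push_cast; ring
        have hmidsum : ∑ t ∈ Finset.Ioo i jj, ((eS σ' t : ℤ) - (eS σ t : ℤ))
            = (((jj : ℕ) - (i : ℕ) - 1 : ℕ) : ℤ) := by
          rw [Finset.sum_congr rfl hone, Finset.sum_const, Fin.card_Ioo]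
          simp
        have he4 : ((eS σ' i : ℤ)) = (eS σ jj : ℤ) := by exact_mod_cast hE4
        have he5 : ((eS σ' jj : ℤ)) = (eS σ i : ℤ) + (((jj : ℕ) : ℤ) - ((i : ℕ) : ℤ)) := by
          rw [hE5]
          push_cast [Nat.cast_sub (le_of_lt hijv)]
          ring
        have hsum_sub : ∑ t : Fin n, ((eS σ' t : ℤ) - (eS σ t : ℤ))
            = (∑ t : Fin n, (eS σ' t : ℤ)) - ∑ t : Fin n, (eS σ t : ℤ) :=
          Finset.sum_sub_distrib _ _
        rw [hsum_sub, hmidsum, he4, he5] at hsplit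
        have hcast : (((jj : ℕ) - (i : ℕ) - 1 : ℕ) : ℤ) = ((jj : ℕ) : ℤ) - ((i : ℕ) : ℤ) - 1 := by
          omega
        rw [hcast] at hsplit
        have : (1 : ℤ) ≤ ((jj : ℕ) : ℤ) - ((i : ℕ) : ℤ) := by omega
        linarith
      -- apply induction hypothesis
      have hub' : (∑ t : Fin n, eS σ' t) ≤ ∑ t : Fin n, (t : ℕ) :=
        Finset.sum_le_sum (fun t _ => eS_le σ' t)
      have hmeasℕ : (∑ t : Fin n, eS σ t) + 1 ≤ ∑ t : Fin n, eS σ' t := by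
        have h := hmeas
        rw [← Nat.cast_sum, ← Nat.cast_sum] at h
        exact_mod_cast h
      have hih := ih σ' (by omega)
      -- combine
      have hFG : ∑ t : Fin n, (f (eS σ' t) - f (eS σ t))
          ≤ ∑ t : Fin n, (|f ((σ t : Fin n) : ℕ) - f (t : ℕ)| - |f ((σ' t : Fin n) : ℕ) - f (t : ℕ)|) := by
        have hGmidsum : ∑ t ∈ Finset.Ioo i jj,
            (|f ((σ t : Fin n) : ℕ) - f (t : ℕ)| - |f ((σ' t : Fin n) : ℕ) - f (t : ℕ)|) = 0 :=
          Finset.sum_eq_zero hGmid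
        rw [hFsplit, hGsplit, hGmidsum]
        linarith [hBound1, hBound2, hGval]
      have e1 : ∑ t : Fin n, (f (eS σ' t) - f (eS σ t))
          = (∑ t : Fin n, f (eS σ' t)) - ∑ t : Fin n, f (eS σ t) := Finset.sum_sub_distrib _ _
      have e2 : ∑ t : Fin n, (|f ((σ t : Fin n) : ℕ) - f (t : ℕ)| - |f ((σ' t : Fin n) : ℕ) - f (t : ℕ)|)
          = (∑ t : Fin n, |f ((σ t : Fin n) : ℕ) - f (t : ℕ)|)
            - ∑ t : Fin n, |f ((σ' t : Fin n) : ℕ) - f (t : ℕ)| := Finset.sum_sub_distrib _ _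
      have e3 : ∑ t : Fin n, (f (t : ℕ) - f (eS σ t))
          = (∑ t : Fin n, f (t : ℕ)) - ∑ t : Fin n, f (eS σ t) := Finset.sum_sub_distrib _ _
      have e4 : ∑ t : Fin n, (f (t : ℕ) - f (eS σ' t))
          = (∑ t : Fin n, f (t : ℕ)) - ∑ t : Fin n, f (eS σ' t) := Finset.sum_sub_distrib _ _
      rw [e1, e2] at hFG
      rw [e4] at hih
      rw [e3]
      linarith


end SCDGK


open SCDGK Finset


/-- The Kendall-Tau-like distance `K(ρ,γ)`: the number of `r`-subsets satisfied by
exactly one of the two rankings `ρ` and `γ`. -/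
noncomputable def kendall (n r : ℕ) (sel : Finset (Fin n) → Fin n)
    (ρ γ : Equiv.Perm (Fin n)) : ℕ :=
  {S : Finset (Fin n) | S.card = r ∧ ¬ (fastSat sel S ρ ↔ fastSat sel S γ)}.ncard

/-- For rankings `ρ, γ` of `Fin n` and `r ≥ 2`, in a dense `r`-FAST instance:
`Σ_v |C(ρ(v)−1, r−1) − C(γ(v)−1, r−1)| ≥ K(ρ, γ)` (0-based positions, so
`ρ(v)−1` is `(ρ v : ℕ)`). -/
theorem sum_choose_diff_ge_kendall
    {n r : ℕ} (hr : 2 ≤ r)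
    (sel : Finset (Fin n) → Fin n)
    (hsel : ∀ S : Finset (Fin n), S.card = r → sel S ∈ S)
    (ρ γ : Equiv.Perm (Fin n)) :
    (kendall n r sel ρ γ : ℤ) ≤
      ∑ v : Fin n, |((ρ v : ℕ).choose (r - 1) : ℤ) - ((γ v : ℕ).choose (r - 1) : ℤ)| := by
  classical
  -- the rank comparison permutation
  set σ : Equiv.Perm (Fin n) := ρ.symm.trans γ with hσdef
  have hσρ : ∀ v : Fin n, σ (ρ v) = γ v := by
    intro v; rw [hσdef]; simp [Equiv.trans_apply]
  set f : ℕ → ℤ := fun t => ((t.choose (r - 1) : ℕ) : ℤ) with hfdef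
  have hmono : ∀ a b : ℕ, a ≤ b → f a ≤ f b := by
    intro a b hab
    simp only [hfdef]
    exact_mod_cast Nat.choose_le_choose (r - 1) hab
  have hconv : ∀ a b : ℕ, a ≤ b → f (a+1) - f a ≤ f (b+1) - f b := by
    intro a b hab
    obtain ⟨m, rfl⟩ : ∃ m, r = m + 2 := ⟨r - 2, by omega⟩
    have e1 : m + 2 - 1 = m + 1 := by omega
    have h1 : (a+1).choose (m+1) = a.choose m + a.choose (m+1) := Nat.choose_succ_succ a m
    have h2 : (b+1).choose (m+1) = b.choose m + b.choose (m+1) := Nat.choose_succ_succ b m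
    have h3 : a.choose m ≤ b.choose m := Nat.choose_le_choose m hab
    simp only [hfdef, e1, h1, h2]
    push_cast
    omega
  -- the local sets
  set Lρ : Fin n → Finset (Fin n) := fun x => Finset.univ.filter (fun u => ρ u < ρ x) with hLρdef
  set Lγ : Fin n → Finset (Fin n) := fun x => Finset.univ.filter (fun u => γ u < γ x) with hLγdef
  set Ex : Fin n → ℕ := fun x => (Finset.univ.filter (fun u => ρ u < ρ x ∧ γ u < γ x)).card
    with hExdef
  have hLρcard : ∀ x, (Lρ x).card = (ρ x : ℕ) := by
    intro x
    have hb : (Lρ x).card = (Finset.Iio (ρ x)).card := by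
      apply Finset.card_bij (fun u _ => ρ u)
      · intro u hu
        simp only [hLρdef, Finset.mem_filter] at hu
        exact Finset.mem_Iio.mpr hu.2
      · intro u hu v hv huv
        exact ρ.injective huv
      · intro w hw
        refine ⟨ρ.symm w, ?_, by simp⟩
        simp only [hLρdef, Finset.mem_filter]
        simp only [Finset.mem_univ, true_and, Equiv.apply_symm_apply]
        exact Finset.mem_Iio.mp hw
    rw [hb, Fin.card_Iio]
  have hEx_eS : ∀ x, Ex x = eS σ (ρ x) := by
    intro x
    rw [hExdef]
    unfold eS
    apply Finset.card_bij (fun u _ => ρ u)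
    · intro u hu
      rw [Finset.mem_filter] at hu ⊢
      refine ⟨Finset.mem_univ _, hu.2.1, ?_⟩
      rw [hσρ u, hσρ x]
      exact hu.2.2
    · intro u _ v _ huv
      exact ρ.injective huv
    · intro w hw
      rw [Finset.mem_filter] at hw
      refine ⟨ρ.symm w, ?_, by simp⟩
      rw [Finset.mem_filter]
      have h1 : ρ (ρ.symm w) = w := ρ.apply_symm_apply w
      have h2 := hw.2.2
      rw [← h1, hσρ (ρ.symm w), hσρ x] at h2
      exact ⟨Finset.mem_univ _, by rw [h1]; exact hw.2.1, h2⟩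
  have hEx_le : ∀ x, Ex x ≤ (ρ x : ℕ) := by
    intro x
    rw [← hLρcard x, hExdef, hLρdef]
    apply Finset.card_le_card
    intro u hu
    rw [Finset.mem_filter] at hu ⊢
    exact ⟨hu.1, hu.2.1⟩
  -- the per-vertex buckets
  set Bx : Fin n → Finset (Finset (Fin n)) := fun x =>
    Finset.univ.filter (fun S : Finset (Fin n) =>
      S.card = r ∧ x ∈ S ∧ (∀ u ∈ S, ρ u ≤ ρ x) ∧ ∃ u ∈ S, γ x < γ u) with hBxdef
  -- step 1: kendall ≤ card of the union
  have hstep1 : (kendall n r sel ρ γ : ℕ) ≤ (Finset.univ.biUnion Bx).card := by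
    unfold kendall
    have hsub : {S : Finset (Fin n) | S.card = r ∧ ¬ (fastSat sel S ρ ↔ fastSat sel S γ)}
        ⊆ ↑(Finset.univ.biUnion Bx) := by
      intro S hS
      obtain ⟨hcard, hdiff⟩ := hS
      have hne : S.Nonempty := Finset.card_pos.mp (by omega)
      obtain ⟨x, hxS, hxmax⟩ := Finset.exists_max_image S ρ hne
      have hm : sel S ∈ S := hsel S hcard
      have hkey : ∃ u ∈ S, γ x < γ u := by
        by_cases hρsat : fastSat sel S ρ
        · have hγsat : ¬ fastSat sel S γ := fun h => hdiff ⟨fun _ => h, fun _ => hρsat⟩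
          have hxm : x = sel S := by
            by_contra hne'
            exact absurd (hxmax (sel S) hm) (not_le.mpr (hρsat x hxS hne'))
          unfold fastSat at hγsat
          push_neg at hγsat
          obtain ⟨u, huS, hune, huγ⟩ := hγsat
          refine ⟨u, huS, ?_⟩
          rw [hxm]
          have : γ (sel S) ≠ γ u := fun hc => hune (γ.injective hc.symm)
          omega
        · have hγsat : fastSat sel S γ := by
            by_contra hγ
            exact hdiff ⟨fun h => absurd h hρsat, fun h => absurd h hγ⟩
          have hxm : x ≠ sel S := by
            intro hEq
            unfold fastSat at hρsat
            push_neg at hρsat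
            obtain ⟨u, huS, hune, huρ⟩ := hρsat
            have h1 : ρ u ≤ ρ (sel S) := hEq ▸ hxmax u huS
            have h2 : ρ u ≠ ρ (sel S) := fun hc => hune (ρ.injective hc)
            omega
          exact ⟨sel S, hm, hγsat x hxS hxm⟩
      have : S ∈ Bx x := by
        rw [hBxdef]
        rw [Finset.mem_filter]
        exact ⟨Finset.mem_univ _, hcard, hxS, hxmax, hkey⟩
      rw [Finset.mem_coe, Finset.mem_biUnion]
      exact ⟨x, Finset.mem_univ x, this⟩
    calc {S : Finset (Fin n) | S.card = r ∧ ¬ (fastSat sel S ρ ↔ fastSat sel S γ)}.ncard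
        ≤ (↑(Finset.univ.biUnion Bx) : Set (Finset (Fin n))).ncard :=
          Set.ncard_le_ncard hsub (Finset.finite_toSet _)
      _ = (Finset.univ.biUnion Bx).card := Set.ncard_coe_finset _
  -- step 2: card of each bucket
  have hstep2 : ∀ x : Fin n, (Bx x).card ≤ (ρ x : ℕ).choose (r-1) - (Ex x).choose (r-1) := by
    intro x
    set Cx : Finset (Finset (Fin n)) :=
      (Finset.powersetCard (r-1) (Lρ x)).filter (fun T => ¬ T ⊆ Lγ x) with hCxdef
    have h1 : (Bx x).card ≤ Cx.card := by
      apply Finset.card_le_card_of_injOn (fun S => S.erase x)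
      · intro S hS
        rw [hBxdef, Finset.mem_coe, Finset.mem_filter] at hS
        obtain ⟨-, hcard, hxS, hmax, u, huS, huγ⟩ := hS
        rw [hCxdef, Finset.mem_coe, Finset.mem_filter, Finset.mem_powersetCard]
        refine ⟨⟨?_, ?_⟩, ?_⟩
        · intro w hw
          rw [Finset.mem_erase] at hw
          rw [hLρdef, Finset.mem_filter]
          refine ⟨Finset.mem_univ _, ?_⟩
          have h2 : ρ w ≤ ρ x := hmax w hw.2
          have h3 : ρ w ≠ ρ x := fun hc => hw.1 (ρ.injective hc)
          omega
        · rw [Finset.card_erase_of_mem hxS, hcard]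
        · intro hsub2
          have hu_ne : u ≠ x := fun hc => absurd huγ (by rw [hc]; exact lt_irrefl _)
          have := hsub2 (Finset.mem_erase.mpr ⟨hu_ne, huS⟩)
          rw [hLγdef, Finset.mem_filter] at this
          omega
      · intro S hS T hT hST
        simp only [Finset.mem_coe, hBxdef, Finset.mem_filter] at hS hT
        have hxS : x ∈ S := hS.2.2.1
        have hxT : x ∈ T := hT.2.2.1
        rw [← Finset.insert_erase hxS, ← Finset.insert_erase hxT]
        simp only at hST
        rw [hST]
    have h2 : Cx.card = (ρ x : ℕ).choose (r-1) - (Ex x).choose (r-1) := by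
      have hsplitC := Finset.card_filter_add_card_filter_not
        (s := Finset.powersetCard (r-1) (Lρ x)) (p := fun T => T ⊆ Lγ x)
      have hposC : ((Finset.powersetCard (r-1) (Lρ x)).filter (fun T => T ⊆ Lγ x))
          = Finset.powersetCard (r-1) (Lρ x ∩ Lγ x) := by
        ext T
        simp only [Finset.mem_filter, Finset.mem_powersetCard, Finset.subset_inter_iff]
        tauto
      have hIcard : (Lρ x ∩ Lγ x).card = Ex x := by
        rw [hExdef, hLρdef, hLγdef]
        simp only
        rw [← Finset.filter_and]
      rw [hposC] at hsplitC
      have ht1 : (Finset.powersetCard (r-1) (Lρ x)).card = (ρ x : ℕ).choose (r-1) := by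
        rw [Finset.card_powersetCard, hLρcard]
      have ht2 : (Finset.powersetCard (r-1) (Lρ x ∩ Lγ x)).card = (Ex x).choose (r-1) := by
        rw [Finset.card_powersetCard, hIcard]
      rw [ht1] at hsplitC
      rw [ht2] at hsplitC
      rw [hCxdef]
      omega
    rw [← h2]
    exact h1
  -- step 3: put everything together
  have hstep3 : kendall n r sel ρ γ ≤
      ∑ x : Fin n, ((ρ x : ℕ).choose (r-1) - (Ex x).choose (r-1)) :=
    le_trans hstep1 (le_trans (Finset.card_biUnion_le)
      (Finset.sum_le_sum (fun x _ => hstep2 x)))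
  have hcast : (kendall n r sel ρ γ : ℤ) ≤ ∑ x : Fin n, (f ((ρ x : Fin n) : ℕ) - f (Ex x)) := by
    calc (kendall n r sel ρ γ : ℤ)
        ≤ ((∑ x : Fin n, ((ρ x : ℕ).choose (r-1) - (Ex x).choose (r-1)) : ℕ) : ℤ) :=
          Nat.cast_le.mpr hstep3
      _ = ∑ x : Fin n, (f ((ρ x : Fin n) : ℕ) - f (Ex x)) := by
          rw [Nat.cast_sum]
          apply Finset.sum_congr rfl
          intro x _
          have hle := Nat.choose_le_choose (r-1) (hEx_le x)
          rw [Nat.cast_sub hle]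
  have hcore := core f hmono hconv (∑ t : Fin n, (t : ℕ)) σ (Nat.sub_le _ _)
  have hreL : ∑ x : Fin n, (f ((ρ x : Fin n) : ℕ) - f (Ex x))
      = ∑ t : Fin n, (f (t : ℕ) - f (eS σ t)) := by
    rw [Finset.sum_congr rfl (fun x _ => by rw [hEx_eS x])]
    exact Equiv.sum_comp ρ (fun t => f (t : ℕ) - f (eS σ t))
  have hreR : ∑ t : Fin n, |f ((σ t : Fin n) : ℕ) - f (t : ℕ)|
      = ∑ v : Fin n, |f ((ρ v : Fin n) : ℕ) - f ((γ v : Fin n) : ℕ)| := by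
    rw [← Equiv.sum_comp ρ (fun t => |f ((σ t : Fin n) : ℕ) - f (t : ℕ)|)]
    apply Finset.sum_congr rfl
    intro v _
    rw [hσρ v]
    exact abs_sub_comm _ _
  calc (kendall n r sel ρ γ : ℤ)
      ≤ ∑ x : Fin n, (f ((ρ x : Fin n) : ℕ) - f (Ex x)) := hcast
    _ = ∑ t : Fin n, (f (t : ℕ) - f (eS σ t)) := hreL
    _ ≤ ∑ t : Fin n, |f ((σ t : Fin n) : ℕ) - f (t : ℕ)| := hcore
    _ = ∑ v : Fin n, |f ((ρ v : Fin n) : ℕ) - f ((γ v : Fin n) : ℕ)| := hreR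
    _ = ∑ v : Fin n, |((ρ v : ℕ).choose (r - 1) : ℤ) - ((γ v : ℕ).choose (r - 1) : ℤ)| := rfl
end

section
/- The Inc-Degree algorithm, which orders the vertices of a dense r-Dense Feedback Arc Set instance by non-decreasing in-degree, is a 5-approximation: if σ_A is the ranking it produces and σ_O an optimal ranking, then b_{σ_A} ≤ 5 · b_{σ_O}, where b_ρ denotes the number of constraints inconsistent with ρ. -/
namespace ID5
open Finset Equiv

variable {n : ℕ}


/-- quadrangle inequality for |·| on ℤ -/
lemma quad (A B c d : ℤ) (hAB : A ≤ B) (hcd : c ≤ d) :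
    |A - c| + |B - d| ≤ |B - c| + |A - d| := by
  rcases abs_cases (A - c) with ⟨h1, _⟩ | ⟨h1, _⟩ <;>
  rcases abs_cases (B - d) with ⟨h2, _⟩ | ⟨h2, _⟩ <;>
  rcases abs_cases (B - c) with ⟨h3, _⟩ | ⟨h3, _⟩ <;>
  rcases abs_cases (A - d) with ⟨h4, _⟩ | ⟨h4, _⟩ <;>
  omega

/-- telescoping sum -/
lemma tel (f : ℕ → ℤ) : ∀ b a : ℕ, a ≤ b →
    ∑ p ∈ Finset.Ico a b, (f (p + 1) - f p) = f b - f a := by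
  intro b
  induction b with
  | zero => intro a ha; interval_cases a; simp
  | succ b ih =>
    intro a ha
    rcases Nat.eq_or_lt_of_le ha with h | h
    · simp [h]
    · have hab : a ≤ b := Nat.lt_succ_iff.mp h
      rw [Finset.sum_Ico_succ_top hab, ih a hab]; ring

def mcount (π : Perm (Fin n)) (x : Fin n) : ℕ :=
  (univ.filter (fun y => y < x ∧ π y < π x)).card

lemma filter_lt_eq_Iio (x : Fin n) : (univ.filter (fun y => y < x)) = Finset.Iio x := by
  ext y; simp

lemma mcount_le_self (π : Perm (Fin n)) (x : Fin n) : mcount π x ≤ (x : ℕ) := by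
  have h : (univ.filter (fun y => y < x ∧ π y < π x)) ⊆ Finset.Iio x := by
    intro y hy; rw [Finset.mem_Iio]; exact (Finset.mem_filter.mp hy).2.1
  simpa [mcount, Fin.card_Iio] using Finset.card_le_card h

lemma mcount_le_pi (π : Perm (Fin n)) (x : Fin n) : mcount π x ≤ ((π x) : ℕ) := by
  have h := Finset.card_le_card_of_injOn (f := fun y => π y)
    (s := univ.filter (fun y => y < x ∧ π y < π x)) (t := Finset.Iio (π x))
    (fun y hy => by rw [Finset.mem_coe, Finset.mem_Iio]; exact (Finset.mem_filter.mp (Finset.mem_coe.mp hy)).2.2)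
    (fun y _ y' _ h => π.injective h)
  simpa [mcount, Fin.card_Iio] using h

section step
variable {π : Perm (Fin n)} {j z : Fin n}

lemma perm'_z' {π : Perm (Fin n)} {j z : Fin n} : (π * Equiv.swap z j) z = π j := by
  simp [Equiv.Perm.mul_apply]
lemma perm'_j' {π : Perm (Fin n)} {j z : Fin n} : (π * Equiv.swap z j) j = π z := by
  simp [Equiv.Perm.mul_apply]


section step
variable {π : Perm (Fin n)} {j z : Fin n}

lemma vtop (htop : ∀ x, j < x → π x = x) : ∀ x, j < π x → π x = x := by
  intro x hx
  have h1 : π (π x) = π x := htop _ hx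
  have := π.injective h1
  rw [this]

lemma midlt (hπz : π z = j) (htop : ∀ x, j < x → π x = x) :
    ∀ x, z < x → x < j → π x < j := by
  intro x hzx hxj
  rcases lt_trichotomy (π x) j with h | h | h
  · exact h
  · exact absurd (π.injective (h.trans hπz.symm)) (ne_of_gt hzx)
  · have h2 := vtop htop x h
    rw [h2] at h
    exact absurd hxj (not_lt_of_gt h)

lemma perm'_apply (x : Fin n) (hx1 : x ≠ z) (hx2 : x ≠ j) :
    (π * Equiv.swap z j) x = π x := by
  simp [Equiv.Perm.mul_apply, Equiv.swap_apply_of_ne_of_ne hx1 hx2]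

lemma perm'_z : (π * Equiv.swap z j) z = π j := by
  simp [Equiv.Perm.mul_apply]

lemma perm'_j (hπz : π z = j) : (π * Equiv.swap z j) j = j := by
  simp [Equiv.Perm.mul_apply, hπz]

lemma mcount_z (hπz : π z = j) (htop : ∀ x, j < x → π x = x) (hzj : z < j) :
    mcount π z = (z : ℕ) := by
  have h : (univ.filter (fun y => y < z ∧ π y < π z)) = Finset.Iio z := by
    ext y
    simp only [Finset.mem_filter, Finset.mem_univ, true_and, Finset.mem_Iio]
    constructor
    · exact fun h => h.1
    · intro hy
      refine ⟨hy, ?_⟩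
      rw [hπz]
      rcases lt_trichotomy (π y) j with h | h | h
      · exact h
      · exact absurd (π.injective (h.trans hπz.symm)) (ne_of_lt hy)
      · have h2 := vtop htop y h
        rw [h2] at h
        exact absurd (hy.trans hzj) (not_lt_of_gt h)
  rw [mcount, h, Fin.card_Iio]

lemma mcount'_z_le_self : mcount (π * Equiv.swap z j) z ≤ (z : ℕ) := by
  have h : (univ.filter (fun y => y < z ∧ (π * Equiv.swap z j) y < (π * Equiv.swap z j) z))
      ⊆ Finset.Iio z := by
    intro y hy; rw [Finset.mem_Iio]; exact (Finset.mem_filter.mp hy).2.1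
  have h2 := Finset.card_le_card h
  rwa [Fin.card_Iio] at h2

lemma mcount'_z_le_a : mcount (π * Equiv.swap z j) z ≤ ((π j : Fin n) : ℕ) := by
  have hz : (π * Equiv.swap z j) z = π j := perm'_z
  have h := Finset.card_le_card_of_injOn (f := fun y => (π * Equiv.swap z j) y)
    (s := univ.filter (fun y => y < z ∧ (π * Equiv.swap z j) y < (π * Equiv.swap z j) z))
    (t := Finset.Iio (π j))
    (fun y hy => by rw [Finset.mem_coe, Finset.mem_Iio, ← hz]; exact (Finset.mem_filter.mp (Finset.mem_coe.mp hy)).2.2)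
    (fun y _ y' _ h => (π * Equiv.swap z j).injective h)
  rwa [Fin.card_Iio] at h

lemma mcount_j (hπz : π z = j) (htop : ∀ x, j < x → π x = x) (haj : π j < j) :
    mcount π j = ((π j : Fin n) : ℕ) := by
  rw [mcount, ← Fin.card_Iio (π j)]
  apply Finset.card_bij (fun y _ => π y)
  · intro y hy
    rw [Finset.mem_Iio]
    exact (Finset.mem_filter.mp hy).2.2
  · intro y _ y' _ h; exact π.injective h
  · intro w hw
    rw [Finset.mem_Iio] at hw
    refine ⟨π.symm w, ?_, by simp⟩
    simp only [Finset.mem_filter, Finset.mem_univ, true_and]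
    have hval : π (π.symm w) = w := π.apply_symm_apply w
    constructor
    · rcases lt_trichotomy (π.symm w) j with h | h | h
      · exact h
      · exfalso; rw [h] at hval; exact (ne_of_lt hw) hval.symm
      · exfalso
        have h2 := htop _ h
        have h3 : w = π.symm w := hval.symm.trans h2
        rw [← h3] at h
        exact absurd (hw.trans haj) (not_lt_of_gt h)
    · rw [hval]; exact hw

lemma mcount'_j (hπz : π z = j) (htop : ∀ x, j < x → π x = x) (hzj : z < j) (haj : π j < j) :
    mcount (π * Equiv.swap z j) j = (j : ℕ) := by
  set π' := π * Equiv.swap z j with hπ'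
  have hj : π' j = j := perm'_j hπz
  have h : (univ.filter (fun y => y < j ∧ π' y < π' j)) = Finset.Iio j := by
    ext y
    simp only [Finset.mem_filter, Finset.mem_univ, true_and, Finset.mem_Iio]
    constructor
    · exact fun h => h.1
    · intro hy
      refine ⟨hy, ?_⟩
      rw [hj]
      by_cases hyz : y = z
      · rw [hyz, hπ']
        rw [show (π * Equiv.swap z j) z = π j from perm'_z]
        exact haj
      · have hyj : y ≠ j := ne_of_lt hy
        rw [hπ', perm'_apply y hyz hyj]
        rcases lt_trichotomy (π y) j with h | h | h
        · exact h
        · exact absurd (π.injective (h.trans hπz.symm)) hyz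
        · have h2 := vtop htop y h
          rw [h2] at h
          exact absurd hy (not_lt_of_gt h)
  rw [mcount, h, Fin.card_Iio]



variable {π : Perm (Fin n)} {j z : Fin n}

lemma perm'_z'X : True := trivial

-- F1 low
lemma mcount_eq_low (hzj : z < j) (x : Fin n) (hx : x < z) :
    mcount (π * Equiv.swap z j) x = mcount π x := by
  have hx1 : x ≠ z := ne_of_lt hx
  have hx2 : x ≠ j := ne_of_lt (hx.trans hzj)
  rw [mcount, mcount]
  congr 1
  ext y
  simp only [Finset.mem_filter, Finset.mem_univ, true_and, and_congr_right_iff]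
  intro h1
  have hy1 : y ≠ z := ne_of_lt (h1.trans hx)
  have hy2 : y ≠ j := ne_of_lt ((h1.trans hx).trans hzj)
  rw [perm'_apply y hy1 hy2, perm'_apply x hx1 hx2]

-- F1 high
lemma mcount_eq_high (hπz : π z = j) (hzj : z < j) (htop : ∀ x, j < x → π x = x)
    (haj : π j < j) (x : Fin n) (hx : j < x) :
    mcount (π * Equiv.swap z j) x = mcount π x := by
  have hx1 : x ≠ z := ne_of_gt (hzj.trans hx)
  have hx2 : x ≠ j := ne_of_gt hx
  have hπx : π x = x := htop x hx
  have hπ'x : (π * Equiv.swap z j) x = π x := perm'_apply x hx1 hx2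
  rw [mcount, mcount]
  congr 1
  ext y
  simp only [Finset.mem_filter, Finset.mem_univ, true_and, and_congr_right_iff]
  intro h1
  by_cases hy1 : y = z
  · rw [hy1, perm'_z', hπz, hπ'x, hπx]
    constructor
    · intro _; exact hx
    · intro _; exact haj.trans hx
  · by_cases hy2 : y = j
    · rw [hy2, perm'_j', hπz, hπ'x, hπx]
      constructor
      · intro _; exact haj.trans hx
      · intro _; exact hx
    · rw [perm'_apply y hy1 hy2, hπ'x]

-- F2 mid
lemma mcount_eq_mid (hπz : π z = j) (hzj : z < j)
    (x : Fin n) (hzx : z < x) (hxj : x < j) (hmid : π x < j) :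
    mcount (π * Equiv.swap z j) x = mcount π x + (if π j < π x then 1 else 0) := by
  have hx1 : x ≠ z := ne_of_gt hzx
  have hx2 : x ≠ j := ne_of_lt hxj
  have hπ'x : (π * Equiv.swap z j) x = π x := perm'_apply x hx1 hx2
  have hznotin : z ∉ univ.filter (fun y => y < x ∧ π y < π x) := by
    simp only [Finset.mem_filter, Finset.mem_univ, true_and, not_and]
    intro _
    rw [hπz]; exact not_lt_of_gt hmid
  by_cases hc : π j < π x
  · rw [if_pos hc]
    have h : (univ.filter (fun y => y < x ∧ (π * Equiv.swap z j) y < (π * Equiv.swap z j) x))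
        = insert z (univ.filter (fun y => y < x ∧ π y < π x)) := by
      ext y
      simp only [Finset.mem_filter, Finset.mem_univ, true_and, Finset.mem_insert]
      by_cases hy1 : y = z
      · rw [hy1]
        simp only [true_or, iff_true]
        exact ⟨hzx, by rw [hπ'x, perm'_z']; exact hc⟩
      · by_cases hy2 : y = j
        · rw [hy2]
          constructor
          · rintro ⟨h1, _⟩; exact absurd (h1.trans hxj) (lt_irrefl j)
          · rintro (h | ⟨h1, _⟩)
            · exact absurd h (Ne.symm (ne_of_lt hzj))
            · exact absurd (h1.trans hxj) (lt_irrefl j)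
        · rw [perm'_apply y hy1 hy2, hπ'x]
          constructor
          · exact fun h => Or.inr h
          · rintro (h | h)
            · exact absurd h hy1
            · exact h
    rw [mcount, mcount, h, Finset.card_insert_of_notMem hznotin]
  · rw [if_neg hc]
    have h : (univ.filter (fun y => y < x ∧ (π * Equiv.swap z j) y < (π * Equiv.swap z j) x))
        = (univ.filter (fun y => y < x ∧ π y < π x)) := by
      ext y
      simp only [Finset.mem_filter, Finset.mem_univ, true_and]
      by_cases hy1 : y = z
      · rw [hy1, hπ'x, perm'_z', hπz]
        constructor
        · rintro ⟨h1, h2⟩; exact absurd h2 hc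
        · rintro ⟨h1, h2⟩; exact absurd h2 (not_lt_of_gt hmid)
      · by_cases hy2 : y = j
        · rw [hy2]
          constructor
          · rintro ⟨h1, _⟩; exact absurd (h1.trans hxj) (lt_irrefl j)
          · rintro ⟨h1, _⟩; exact absurd (h1.trans hxj) (lt_irrefl j)
        · rw [perm'_apply y hy1 hy2, hπ'x]
    rw [mcount, mcount, h]
    simp

-- mid x does not dominate z
lemma mcount_le_mid (hπz : π z = j) (x : Fin n) (hzx : z < x) (hmid : π x < j) :
    mcount π x + 1 ≤ (x : ℕ) := by
  have h : (univ.filter (fun y => y < x ∧ π y < π x)) ⊆ (Finset.Iio x).erase z := by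
    intro y hy
    rw [Finset.mem_erase, Finset.mem_Iio]
    rcases Finset.mem_filter.mp hy with ⟨_, h1, h2⟩
    refine ⟨?_, h1⟩
    intro hyz
    rw [hyz, hπz] at h2
    exact absurd (h2.trans hmid) (lt_irrefl _)
  have h2 := Finset.card_le_card h
  rw [Finset.card_erase_of_mem (by rw [Finset.mem_Iio]; exact hzx), Fin.card_Iio] at h2
  have hxpos : 0 < (x : ℕ) := lt_of_le_of_lt (Nat.zero_le _) (by exact_mod_cast hzx)
  unfold mcount
  omega

-- descent
lemma descent (hπz : π z = j) (hzj : z < j) :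
    (univ.filter (fun x => (π * Equiv.swap z j) x ≠ x)) ⊆
      (univ.filter (fun x => π x ≠ x)).erase j := by
  intro x hx
  rcases Finset.mem_filter.mp hx with ⟨_, hne⟩
  rw [Finset.mem_erase, Finset.mem_filter]
  have hxj : x ≠ j := by
    intro h
    apply hne
    rw [h, perm'_j', hπz]
  refine ⟨hxj, Finset.mem_univ x, ?_⟩
  by_cases hxz : x = z
  · rw [hxz, hπz]; exact Ne.symm (ne_of_lt hzj)
  · rwa [perm'_apply x hxz hxj] at hne

end step
end step

variable {π : Perm (Fin n)} {j z : Fin n}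

noncomputable def Lh (f : ℕ → ℤ) (π : Perm (Fin n)) : ℤ :=
  ∑ x : Fin n, (f (min (x : ℕ) ((π x : Fin n) : ℕ)) - f (mcount π x))

noncomputable def Rh (f : ℕ → ℤ) (π : Perm (Fin n)) : ℤ :=
  ∑ x : Fin n, max (f (x : ℕ) - f ((π x : Fin n) : ℕ)) 0

theorem coreHalf (f : ℕ → ℤ) (hf : Monotone f)
    (hstep : ∀ s t : ℕ, s ≤ t → f (s + 1) - f s ≤ f (t + 1) - f t)
    (π₀ : Perm (Fin n)) : Lh f π₀ ≤ Rh f π₀ := by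
  suffices H : ∀ N (π : Perm (Fin n)), (univ.filter (fun x => π x ≠ x)).card ≤ N →
      Lh f π ≤ Rh f π from H _ π₀ le_rfl
  intro N
  induction N with
  | zero =>
    intro π hd
    have hfix : ∀ x, π x = x := by
      intro x
      by_contra hne
      have hmem : x ∈ univ.filter (fun x => π x ≠ x) := by
        simp only [Finset.mem_filter, Finset.mem_univ, true_and]; exact hne
      have := Finset.card_pos.mpr ⟨x, hmem⟩
      omega
    have hL : Lh f π = 0 := by
      rw [Lh]
      apply Finset.sum_eq_zero
      intro x _
      have hm : mcount π x = (x : ℕ) := by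
        have : (univ.filter (fun y => y < x ∧ π y < π x)) = Finset.Iio x := by
          ext y
          simp [hfix]
        rw [mcount, this, Fin.card_Iio]
      rw [hm, hfix x, min_self, sub_self]
    have hR : Rh f π = 0 := by
      rw [Rh]
      apply Finset.sum_eq_zero
      intro x _
      rw [hfix x, sub_self, max_self]
    rw [hL, hR]
  | succ N IH =>
    intro π hd
    by_cases h0 : (univ.filter (fun x => π x ≠ x)).card = 0
    · exact IH π (by omega)
    have hne : (univ.filter (fun x => π x ≠ x)).Nonempty :=
      Finset.card_pos.mp (Nat.pos_of_ne_zero h0)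
    set Mp := univ.filter (fun x => π x ≠ x) with hMp
    set j := Mp.max' hne with hjdef
    have hjmem : j ∈ Mp := Mp.max'_mem hne
    have hj : π j ≠ j := (Finset.mem_filter.mp hjmem).2
    have htop : ∀ x, j < x → π x = x := by
      intro x hx
      by_contra hne'
      have : x ∈ Mp := by rw [hMp]; simp only [Finset.mem_filter, Finset.mem_univ, true_and]; exact hne'
      exact absurd (Mp.le_max' x this) (not_le_of_gt hx)
    set z := π.symm j with hzdef
    have hπz : π z = j := π.apply_symm_apply j
    have hzj : z < j := by
      rcases lt_trichotomy z j with h | h | h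
      · exact h
      · exfalso; apply hj; rw [← h, hπz, h]
      · exfalso
        have h2 := htop z h
        rw [hπz] at h2
        exact (ne_of_lt h) h2
    have haj : π j < j := by
      rcases lt_trichotomy (π j) j with h | h | h
      · exact h
      · exact absurd h hj
      · exfalso
        have := vtop htop j h
        exact hj this
    set π' := π * Equiv.swap z j with hπ'def
    have hd' : (univ.filter (fun x => π' x ≠ x)).card ≤ N := by
      have hsub := descent (π := π) hπz hzj
      have h1 := Finset.card_le_card hsub
      rw [Finset.card_erase_of_mem hjmem] at h1
      rw [← hπ'def] at h1
      have hpos : 0 < Mp.card := Nat.pos_of_ne_zero h0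
      omega
    have IH' := IH π' hd'
    -- pointwise L bound
    have hLx : ∀ x : Fin n,
        (f (min (x : ℕ) ((π x : Fin n) : ℕ)) - f (mcount π x))
          - (f (min (x : ℕ) ((π' x : Fin n) : ℕ)) - f (mcount π' x))
        ≤ (if z < x ∧ x < j ∧ π j < π x then f (mcount π x + 1) - f (mcount π x) else 0) := by
      intro x
      rcases lt_trichotomy x z with hx | hx | hx
      · have e1 : π' x = π x := by
          rw [hπ'def]; exact perm'_apply x (ne_of_lt hx) (ne_of_lt (hx.trans hzj))
        have e2 : mcount π' x = mcount π x := by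
          rw [hπ'def]; exact mcount_eq_low hzj x hx
        rw [e1, e2, if_neg (by rintro ⟨h1, _, _⟩; exact absurd hx (not_lt_of_gt h1))]
        simp
      · rw [hx]
        have e1 : π' z = π j := by rw [hπ'def]; exact perm'_z'
        rw [e1, hπz, mcount_z hπz htop hzj,
          if_neg (by rintro ⟨h1, _, _⟩; exact lt_irrefl z h1)]
        have hminzj : min (z : ℕ) (j : ℕ) = (z : ℕ) :=
          min_eq_left (le_of_lt (by exact_mod_cast hzj))
        rw [hminzj, sub_self]
        have hle : mcount π' z ≤ min (z : ℕ) ((π j : Fin n) : ℕ) :=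
          le_min (by rw [hπ'def]; exact mcount'_z_le_self)
            (by rw [hπ'def]; exact mcount'_z_le_a)
        have := hf hle
        linarith
      · rcases lt_trichotomy x j with hxj | hxj | hxj
        · have hmid : π x < j := midlt hπz htop x hx hxj
          have e1 : π' x = π x := by
            rw [hπ'def]; exact perm'_apply x (ne_of_gt hx) (ne_of_lt hxj)
          have e2 : mcount π' x = mcount π x + (if π j < π x then 1 else 0) := by
            rw [hπ'def]; exact mcount_eq_mid hπz hzj x hx hxj hmid
          rw [e1, e2]
          by_cases hc : π j < π x
          · rw [if_pos hc, if_pos ⟨hx, hxj, hc⟩]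
            linarith
          · rw [if_neg hc, if_neg (by rintro ⟨_, _, hc'⟩; exact hc hc')]
            simp
        · rw [hxj]
          have e1 : π' j = j := by rw [hπ'def, perm'_j', hπz]
          have e2 : mcount π' j = (j : ℕ) := by
            rw [hπ'def]; exact mcount'_j hπz htop hzj haj
          rw [e1, e2, mcount_j hπz htop haj,
            if_neg (by rintro ⟨_, hjj, _⟩; exact lt_irrefl j hjj)]
          have hm1 : min (j : ℕ) ((π j : Fin n) : ℕ) = ((π j : Fin n) : ℕ) :=
            min_eq_right (le_of_lt (by exact_mod_cast haj))
          rw [hm1, min_self]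
          simp
        · have e1 : π' x = π x := by
            rw [hπ'def]; exact perm'_apply x (ne_of_gt (hzj.trans hxj)) (ne_of_gt hxj)
          have e2 : mcount π' x = mcount π x := by
            rw [hπ'def]; exact mcount_eq_high hπz hzj htop haj x hxj
          rw [e1, e2, if_neg (by rintro ⟨_, h2, _⟩; exact absurd (hxj.trans h2) (lt_irrefl _))]
          simp
    -- pointwise R identity
    have hRx : ∀ x : Fin n,
        max (f (x : ℕ) - f ((π x : Fin n) : ℕ)) 0 - max (f (x : ℕ) - f ((π' x : Fin n) : ℕ)) 0
        = (if x = z then max (f (z : ℕ) - f (j : ℕ)) 0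
              - max (f (z : ℕ) - f ((π j : Fin n) : ℕ)) 0 else 0)
          + (if x = j then max (f (j : ℕ) - f ((π j : Fin n) : ℕ)) 0 else 0) := by
      intro x
      by_cases hx : x = z
      · have e1 : π' z = π j := by rw [hπ'def]; exact perm'_z'
        rw [hx, e1, hπz, if_pos rfl, if_neg (ne_of_lt hzj)]
        ring
      · by_cases hx2 : x = j
        · have e1 : π' j = j := by rw [hπ'def, perm'_j', hπz]
          rw [hx2, e1, if_neg (show (j : Fin n) ≠ z from ne_of_gt hzj), if_pos rfl]
          simp
        · have e1 : π' x = π x := by rw [hπ'def]; exact perm'_apply x hx hx2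
          rw [e1, if_neg hx, if_neg hx2]
          ring
    set sel := univ.filter (fun x => z < x ∧ x < j ∧ π j < π x) with hsel
    have hL : Lh f π - Lh f π' ≤ ∑ x ∈ sel, (f (mcount π x + 1) - f (mcount π x)) := by
      rw [Lh, Lh, ← Finset.sum_sub_distrib]
      refine le_of_le_of_eq (Finset.sum_le_sum (fun x _ => hLx x)) ?_
      rw [hsel, Finset.sum_filter]
    have hR : Rh f π - Rh f π' =
        (max (f (z : ℕ) - f (j : ℕ)) 0 - max (f (z : ℕ) - f ((π j : Fin n) : ℕ)) 0)
          + max (f (j : ℕ) - f ((π j : Fin n) : ℕ)) 0 := by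
      rw [Rh, Rh, ← Finset.sum_sub_distrib, Finset.sum_congr rfl (fun x _ => hRx x),
        Finset.sum_add_distrib, Finset.sum_ite_eq' univ z, Finset.sum_ite_eq' univ j]
      simp
    have hfzj : f (z : ℕ) ≤ f (j : ℕ) := hf (le_of_lt (by exact_mod_cast hzj))
    have hfaj : f ((π j : Fin n) : ℕ) ≤ f (j : ℕ) := hf (le_of_lt (by exact_mod_cast haj))
    have hmzj : max (f (z : ℕ) - f (j : ℕ)) 0 = 0 := max_eq_right (by linarith)
    have hmja : max (f (j : ℕ) - f ((π j : Fin n) : ℕ)) 0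
        = f (j : ℕ) - f ((π j : Fin n) : ℕ) := max_eq_left (by linarith)
    -- the key bound on the middle sum
    have hkey : ∑ x ∈ sel, (f (mcount π x + 1) - f (mcount π x))
        ≤ (f (j : ℕ) - f ((π j : Fin n) : ℕ))
          - max (f (z : ℕ) - f ((π j : Fin n) : ℕ)) 0 := by
      have haj' : ((π j : Fin n) : ℕ) < (j : ℕ) := by exact_mod_cast haj
      by_cases hza : (z : ℕ) ≤ ((π j : Fin n) : ℕ)
      · have hmax0 : max (f (z : ℕ) - f ((π j : Fin n) : ℕ)) 0 = 0 :=
          max_eq_right (by have := hf hza; linarith)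
        rw [hmax0, sub_zero]
        have step1 : ∑ x ∈ sel, (f (mcount π x + 1) - f (mcount π x))
            ≤ ∑ x ∈ sel, (f (((π x : Fin n) : ℕ) + 1) - f ((π x : Fin n) : ℕ)) :=
          Finset.sum_le_sum (fun x _ => hstep _ _ (mcount_le_pi π x))
        have step2 : ∑ x ∈ sel, (f (((π x : Fin n) : ℕ) + 1) - f ((π x : Fin n) : ℕ))
            = ∑ p ∈ sel.image (fun x => ((π x : Fin n) : ℕ)), (f (p + 1) - f p) := by
          rw [Finset.sum_image]
          intro x _ y _ h
          exact π.injective (Fin.val_injective h)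
        have step3 : sel.image (fun x => ((π x : Fin n) : ℕ))
            ⊆ Finset.Ico (((π j : Fin n) : ℕ) + 1) (j : ℕ) := by
          intro p hp
          rcases Finset.mem_image.mp hp with ⟨x, hxs, rfl⟩
          rcases Finset.mem_filter.mp hxs with ⟨_, hzx, hxj, hax⟩
          rw [Finset.mem_Ico]
          constructor
          · have : ((π j : Fin n) : ℕ) < ((π x : Fin n) : ℕ) := by exact_mod_cast hax
            omega
          · exact_mod_cast midlt hπz htop x hzx hxj
        have step4 : ∑ p ∈ sel.image (fun x => ((π x : Fin n) : ℕ)), (f (p + 1) - f p)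
            ≤ ∑ p ∈ Finset.Ico (((π j : Fin n) : ℕ) + 1) (j : ℕ), (f (p + 1) - f p) :=
          Finset.sum_le_sum_of_subset_of_nonneg step3
            (fun p _ _ => sub_nonneg.mpr (hf (Nat.le_succ p)))
        have step5 : ∑ p ∈ Finset.Ico (((π j : Fin n) : ℕ) + 1) (j : ℕ), (f (p + 1) - f p)
            = f (j : ℕ) - f (((π j : Fin n) : ℕ) + 1) := tel f _ _ (by omega)
        have step6 : f ((π j : Fin n) : ℕ) ≤ f (((π j : Fin n) : ℕ) + 1) := hf (Nat.le_succ _)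
        linarith
      · push_neg at hza
        have hmaxa : max (f (z : ℕ) - f ((π j : Fin n) : ℕ)) 0
            = f (z : ℕ) - f ((π j : Fin n) : ℕ) :=
          max_eq_left (by have := hf (le_of_lt hza); linarith)
        rw [hmaxa]
        have step1 : ∑ x ∈ sel, (f (mcount π x + 1) - f (mcount π x))
            ≤ ∑ x ∈ sel, (f (((x : ℕ) - 1) + 1) - f ((x : ℕ) - 1)) := by
          apply Finset.sum_le_sum
          intro x hx
          rcases Finset.mem_filter.mp hx with ⟨_, hzx, hxj, _⟩
          have h1 := mcount_le_mid hπz x hzx (midlt hπz htop x hzx hxj)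
          exact hstep _ _ (by omega)
        have step2 : ∑ x ∈ sel, (f (((x : ℕ) - 1) + 1) - f ((x : ℕ) - 1))
            = ∑ p ∈ sel.image (fun x : Fin n => (x : ℕ) - 1), (f (p + 1) - f p) := by
          rw [Finset.sum_image]
          intro x hx y hy h
          rcases Finset.mem_filter.mp hx with ⟨_, hzx, _, _⟩
          rcases Finset.mem_filter.mp hy with ⟨_, hzy, _, _⟩
          have hx1 : (z : ℕ) < (x : ℕ) := by exact_mod_cast hzx
          have hy1 : (z : ℕ) < (y : ℕ) := by exact_mod_cast hzy
          exact Fin.val_injective (by simp only at h; omega)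
        have step3 : sel.image (fun x : Fin n => (x : ℕ) - 1)
            ⊆ Finset.Ico (z : ℕ) ((j : ℕ) - 1) := by
          intro p hp
          rcases Finset.mem_image.mp hp with ⟨x, hxs, rfl⟩
          rcases Finset.mem_filter.mp hxs with ⟨_, hzx, hxj, _⟩
          have hx1 : (z : ℕ) < (x : ℕ) := by exact_mod_cast hzx
          have hx2 : (x : ℕ) < (j : ℕ) := by exact_mod_cast hxj
          rw [Finset.mem_Ico]
          omega
        have step4 : ∑ p ∈ sel.image (fun x : Fin n => (x : ℕ) - 1), (f (p + 1) - f p)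
            ≤ ∑ p ∈ Finset.Ico (z : ℕ) ((j : ℕ) - 1), (f (p + 1) - f p) :=
          Finset.sum_le_sum_of_subset_of_nonneg step3
            (fun p _ _ => sub_nonneg.mpr (hf (Nat.le_succ p)))
        have hzj' : (z : ℕ) < (j : ℕ) := by exact_mod_cast hzj
        have step5 : ∑ p ∈ Finset.Ico (z : ℕ) ((j : ℕ) - 1), (f (p + 1) - f p)
            = f ((j : ℕ) - 1) - f (z : ℕ) := tel f _ _ (by omega)
        have step6 : f ((j : ℕ) - 1) ≤ f (j : ℕ) := hf (by omega)
        linarith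
    linarith [IH']

theorem core (f : ℕ → ℤ) (hf : Monotone f)
    (hstep : ∀ s t : ℕ, s ≤ t → f (s + 1) - f s ≤ f (t + 1) - f t)
    (π : Perm (Fin n)) :
    ∑ x : Fin n, (f (x : ℕ) - f (mcount π x))
      ≤ ∑ x : Fin n, |f ((π x : Fin n) : ℕ) - f (x : ℕ)| := by
  have hmin : ∀ x : Fin n, f (x : ℕ) - f (min (x : ℕ) ((π x : Fin n) : ℕ))
      = max (f (x : ℕ) - f ((π x : Fin n) : ℕ)) 0 := by
    intro x
    rcases le_total (x : ℕ) ((π x : Fin n) : ℕ) with h | h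
    · rw [min_eq_left h, sub_self, max_eq_right (by have := hf h; linarith)]
    · rw [min_eq_right h, max_eq_left (by have := hf h; linarith)]
  have hsplit : ∑ x : Fin n, (f (x : ℕ) - f (mcount π x)) = Lh f π + Rh f π := by
    rw [Lh, Rh, ← Finset.sum_add_distrib]
    apply Finset.sum_congr rfl
    intro x _
    rw [← hmin x]
    ring
  have hzero : ∑ x : Fin n, (f ((π x : Fin n) : ℕ) - f (x : ℕ)) = 0 := by
    rw [Finset.sum_sub_distrib]
    rw [show ∑ x : Fin n, f ((π x : Fin n) : ℕ) = ∑ x : Fin n, f (x : ℕ) from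
      Equiv.sum_comp π (fun x => f (x : ℕ))]
    ring
  have habs : ∑ x : Fin n, |f ((π x : Fin n) : ℕ) - f (x : ℕ)| = 2 * Rh f π := by
    have hpt : ∀ x : Fin n, |f ((π x : Fin n) : ℕ) - f (x : ℕ)|
        = 2 * max (f (x : ℕ) - f ((π x : Fin n) : ℕ)) 0
          + (f ((π x : Fin n) : ℕ) - f (x : ℕ)) := by
      intro x
      rcases le_total (f ((π x : Fin n) : ℕ)) (f (x : ℕ)) with h | h
      · rw [abs_of_nonpos (by linarith), max_eq_left (by linarith)]; ring
      · rw [abs_of_nonneg (by linarith), max_eq_right (by linarith)]; ring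
    rw [Finset.sum_congr rfl (fun x _ => hpt x), Finset.sum_add_distrib, hzero,
      ← Finset.mul_sum, Rh]
    ring
  have := coreHalf f hf hstep π
  rw [hsplit, habs]
  linarith

/-- rearrangement: the σA order minimizes ∑ |F(σ v) - g v| -/
theorem rearrange (F : ℕ → ℤ) (hF : Monotone F) (g : Fin n → ℤ) (σA : Perm (Fin n))
    (hA : ∀ u v : Fin n, σA u < σA v → g u ≤ g v) (σ : Perm (Fin n)) :
    ∑ v : Fin n, |F ((σA v : Fin n) : ℕ) - g v| ≤ ∑ v : Fin n, |F ((σ v : Fin n) : ℕ) - g v| := by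
  -- measure: μ σ = ∑ (σ v) * (σA v), strictly increases along improving swaps
  set μ : Perm (Fin n) → ℕ := fun σ => ∑ v : Fin n, ((σ v : Fin n) : ℕ) * ((σA v : Fin n) : ℕ)
    with hμ
  have hbound : ∀ σ' : Perm (Fin n), 0 < n → μ σ' < n * n * n := by
    intro σ' hn
    have h1 : μ σ' ≤ ∑ _v : Fin n, (n - 1) * (n - 1) := by
      apply Finset.sum_le_sum
      intro v _
      exact Nat.mul_le_mul (Nat.le_pred_of_lt (Fin.is_lt _)) (Nat.le_pred_of_lt (Fin.is_lt _))
    have h2 : ∑ _v : Fin n, (n - 1) * (n - 1) = n * ((n - 1) * (n - 1)) := by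
      rw [Finset.sum_const, Finset.card_univ, Fintype.card_fin, smul_eq_mul]
    have h3 : (n - 1) * (n - 1) < n * n := by
      calc (n - 1) * (n - 1) ≤ (n - 1) * n := Nat.mul_le_mul_left _ (by omega)
        _ < n * n := mul_lt_mul_of_pos_right (by omega) hn
    calc μ σ' ≤ n * ((n - 1) * (n - 1)) := h1.trans (le_of_eq h2)
      _ < n * (n * n) := mul_lt_mul_of_pos_left h3 hn
      _ = n * n * n := by ring
  -- induction on n^3 - μ σ
  suffices H : ∀ (N : ℕ) (σ : Perm (Fin n)), n * n * n - μ σ ≤ N →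
      ∑ v : Fin n, |F ((σA v : Fin n) : ℕ) - g v| ≤ ∑ v : Fin n, |F ((σ v : Fin n) : ℕ) - g v|
    from H _ σ le_rfl
  intro N
  induction N with
  | zero =>
    intro σ hm
    rcases Nat.eq_zero_or_pos n with hn | hn
    · subst hn
      simp
    · exfalso
      have := hbound σ hn
      omega
  | succ N IH =>
    intro σ hm
    by_cases hsm : ∀ a b : Fin n, a < b → σA (σ.symm a) < σA (σ.symm b)
    · -- σ agrees with σA
      have hid : ∀ v : Fin n, σA v = σ v := by
        set τ : Perm (Fin n) := σ.symm.trans σA with hτ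
        have hτmono : StrictMono (fun a => τ a) := by
          intro a b hab
          exact hsm a b hab
        have hle1 : ∀ x : Fin n, (x : ℕ) ≤ ((τ x : Fin n) : ℕ) := by
          intro x
          have hcard := Finset.card_le_card_of_injOn (f := fun y => τ y)
            (s := Finset.Iio x) (t := Finset.Iio (τ x))
            (fun y hy => by
              rw [Finset.mem_coe, Finset.mem_Iio] at hy ⊢
              exact hτmono hy)
            (fun y _ y' _ h => τ.injective h)
          rwa [Fin.card_Iio, Fin.card_Iio] at hcard
        have hτsymm : StrictMono (fun a => τ.symm a) := by
          intro a b hab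
          rcases lt_trichotomy (τ.symm a) (τ.symm b) with h | h | h
          · exact h
          · exfalso; rw [show a = b from by
              have := congrArg τ h
              simpa using this] at hab
            exact lt_irrefl b hab
          · exfalso
            have := hτmono h
            simp only [Equiv.apply_symm_apply] at this
            exact absurd hab (not_lt_of_gt this)
        have hle2 : ∀ x : Fin n, (x : ℕ) ≤ ((τ.symm x : Fin n) : ℕ) := by
          intro x
          have hcard := Finset.card_le_card_of_injOn (f := fun y => τ.symm y)
            (s := Finset.Iio x) (t := Finset.Iio (τ.symm x))
            (fun y hy => by
              rw [Finset.mem_coe, Finset.mem_Iio] at hy ⊢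
              exact hτsymm hy)
            (fun y _ y' _ h => τ.symm.injective h)
          rwa [Fin.card_Iio, Fin.card_Iio] at hcard
        have hτid : ∀ x : Fin n, τ x = x := by
          intro x
          have h1 := hle1 x
          have h2 := hle2 (τ x)
          simp only [Equiv.symm_apply_apply] at h2
          exact Fin.ext (le_antisymm h2 h1)
        intro v
        have := hτid (σ v)
        rw [hτ] at this
        simpa using this
      apply le_of_eq
      apply Finset.sum_congr rfl
      intro v _
      rw [hid v]
    · push_neg at hsm
      obtain ⟨a, b, hab, hba⟩ := hsm
      set u := σ.symm b with hu
      set v := σ.symm a with hv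
      have hσu : σ u = b := σ.apply_symm_apply b
      have hσv : σ v = a := σ.apply_symm_apply a
      have huv : u ≠ v := by
        intro h
        rw [hu, hv] at h
        have h2 := σ.symm.injective h
        exact (ne_of_lt hab) h2.symm
      have hσAuv : σA u < σA v := by
        rcases lt_or_eq_of_le hba with h | h
        · exact h
        · exact absurd (σA.injective h) huv
      have hguv : g u ≤ g v := hA u v hσAuv
      set σ' := σ * Equiv.swap u v with hσ'
      have hσ'u : σ' u = a := by
        rw [hσ']
        simp only [Equiv.Perm.mul_apply, Equiv.swap_apply_left]
        exact hσv
      have hσ'v : σ' v = b := by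
        rw [hσ']
        simp only [Equiv.Perm.mul_apply, Equiv.swap_apply_right]
        exact hσu
      have hσ'w : ∀ w : Fin n, w ≠ u → w ≠ v → σ' w = σ w := by
        intro w h1 h2
        rw [hσ']
        simp only [Equiv.Perm.mul_apply, Equiv.swap_apply_of_ne_of_ne h1 h2]
      -- the swapped sum is no larger
      have hpt : ∀ w : Fin n, |F ((σ' w : Fin n) : ℕ) - g w|
          = |F ((σ w : Fin n) : ℕ) - g w|
            + ((if w = u then |F ((a : Fin n) : ℕ) - g u| - |F ((b : Fin n) : ℕ) - g u| else 0)
              + (if w = v then |F ((b : Fin n) : ℕ) - g v| - |F ((a : Fin n) : ℕ) - g v| else 0)) := by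
        intro w
        by_cases h1 : w = u
        · rw [h1, if_pos rfl, if_neg huv, hσ'u, hσu]
          ring
        · by_cases h2 : w = v
          · rw [h2, if_neg (Ne.symm huv), if_pos rfl, hσ'v, hσv]
            ring
          · rw [if_neg h1, if_neg h2, hσ'w w h1 h2]
            ring
      have hswap : ∑ w : Fin n, |F ((σ' w : Fin n) : ℕ) - g w|
          ≤ ∑ w : Fin n, |F ((σ w : Fin n) : ℕ) - g w| := by
        rw [Finset.sum_congr rfl (fun w _ => hpt w), Finset.sum_add_distrib,
          Finset.sum_add_distrib, Finset.sum_ite_eq' univ u, Finset.sum_ite_eq' univ v]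
        simp only [Finset.mem_univ, if_pos]
        have hFab : F ((a : Fin n) : ℕ) ≤ F ((b : Fin n) : ℕ) :=
          hF (le_of_lt (by exact_mod_cast hab))
        have hq := quad (F ((a : Fin n) : ℕ)) (F ((b : Fin n) : ℕ)) (g u) (g v) hFab hguv
        linarith
      -- measure strictly increases
      have hn : 0 < n := u.pos
      have hμlt : μ σ < μ σ' := by
        have hZ : (μ σ' : ℤ) - (μ σ : ℤ)
            = (((b : Fin n) : ℕ) - ((a : Fin n) : ℕ) : ℤ)
              * (((σA v : Fin n) : ℕ) - ((σA u : Fin n) : ℕ) : ℤ) := by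
          rw [hμ]
          push_cast
          rw [← Finset.sum_sub_distrib]
          have hptμ : ∀ w : Fin n, (((σ' w : Fin n) : ℕ) : ℤ) * (((σA w : Fin n) : ℕ) : ℤ)
              - (((σ w : Fin n) : ℕ) : ℤ) * (((σA w : Fin n) : ℕ) : ℤ)
              = (if w = u then ((((a : Fin n) : ℕ) : ℤ) - (((b : Fin n) : ℕ) : ℤ))
                    * (((σA u : Fin n) : ℕ) : ℤ) else 0)
                + (if w = v then ((((b : Fin n) : ℕ) : ℤ) - (((a : Fin n) : ℕ) : ℤ))
                    * (((σA v : Fin n) : ℕ) : ℤ) else 0) := by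
            intro w
            by_cases h1 : w = u
            · rw [h1, if_pos rfl, if_neg huv, hσ'u, hσu]; ring
            · by_cases h2 : w = v
              · rw [h2, if_neg (Ne.symm huv), if_pos rfl, hσ'v, hσv]; ring
              · rw [if_neg h1, if_neg h2, hσ'w w h1 h2]; ring
          rw [Finset.sum_congr rfl (fun w _ => hptμ w), Finset.sum_add_distrib,
            Finset.sum_ite_eq' univ u, Finset.sum_ite_eq' univ v]
          simp only [Finset.mem_univ, if_pos]
          ring
        have hab' : (((a : Fin n) : ℕ) : ℤ) < (((b : Fin n) : ℕ) : ℤ) := by exact_mod_cast hab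
        have hAuv' : (((σA u : Fin n) : ℕ) : ℤ) < (((σA v : Fin n) : ℕ) : ℤ) := by
          exact_mod_cast hσAuv
        have hpos : (0 : ℤ) < (μ σ' : ℤ) - (μ σ : ℤ) := by
          rw [hZ]
          apply mul_pos <;> linarith
        exact_mod_cast (by linarith : (μ σ : ℤ) < (μ σ' : ℤ))
      have hμσ' := hbound σ' hn
      have IH' := IH σ' (by omega)
      exact IH'.trans hswap


def SS (n r : ℕ) : Finset (Finset (Fin n)) := Finset.univ.powersetCard r

def isMax (ρ : Perm (Fin n)) (S : Finset (Fin n)) (v : Fin n) : Prop :=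
  v ∈ S ∧ ∀ u ∈ S, ρ u ≤ ρ v

instance (ρ : Perm (Fin n)) (S : Finset (Fin n)) (v : Fin n) : Decidable (isMax ρ S v) :=
  inferInstanceAs (Decidable (_ ∧ _))

lemma isMax_unique {ρ : Perm (Fin n)} {S : Finset (Fin n)} {v w : Fin n}
    (h1 : isMax ρ S v) (h2 : isMax ρ S w) : v = w :=
  ρ.injective (le_antisymm (h2.2 v h1.1) (h1.2 w h2.1))

lemma exists_isMax (ρ : Perm (Fin n)) {S : Finset (Fin n)} (h : S.Nonempty) :
    ∃ v, isMax ρ S v := by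
  obtain ⟨b, hb, hmax⟩ := S.exists_max_image (fun u => ρ u) h
  exact ⟨b, hb, hmax⟩

lemma mem_SS {r : ℕ} {S : Finset (Fin n)} : S ∈ SS n r ↔ S.card = r :=
  Finset.mem_powersetCard_univ

lemma SS_nonempty_mem {r : ℕ} (hr : 1 ≤ r) {S : Finset (Fin n)} (hS : S ∈ SS n r) :
    S.Nonempty := by
  rw [mem_SS] at hS
  rw [← Finset.card_pos, hS]
  omega

/-- fiberwise counting by the max vertex -/
lemma card_eq_sum_isMax (ρ : Perm (Fin n)) (s : Finset (Finset (Fin n)))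
    (hs : ∀ S ∈ s, S.Nonempty) :
    s.card = ∑ v : Fin n, (s.filter (fun S => isMax ρ S v)).card := by
  have h1 : ∀ v : Fin n, (s.filter (fun S => isMax ρ S v)).card
      = ∑ S ∈ s, if isMax ρ S v then 1 else 0 := fun v => Finset.card_filter _ _
  rw [Finset.sum_congr rfl (fun v _ => h1 v), Finset.sum_comm]
  have h2 : ∀ S ∈ s, (∑ v : Fin n, if isMax ρ S v then 1 else 0) = 1 := by
    intro S hS
    obtain ⟨w, hw⟩ := exists_isMax ρ (hs S hS)
    have h3 : ∀ v : Fin n, isMax ρ S v ↔ v = w :=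
      fun v => ⟨fun h => isMax_unique h hw, fun h => h ▸ hw⟩
    simp only [h3]
    rw [Finset.sum_ite_eq' univ w (fun _ => 1)]
    simp
  rw [Finset.sum_congr rfl h2]
  simp

/-- the number of r-sets whose "allowed" part forms prefixes: generic binomial count -/
lemma card_max_sets {r : ℕ} (hr : 1 ≤ r) (v : Fin n) (P : Finset (Fin n)) (hv : v ∉ P)
    (cond : Finset (Fin n) → Prop) [DecidablePred cond]
    (hcond : ∀ S : Finset (Fin n), S.card = r →
      (cond S ↔ v ∈ S ∧ ∀ u ∈ S, u ≠ v → u ∈ P)) :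
    ((SS n r).filter cond).card = P.card.choose (r - 1) := by
  rw [← Finset.card_powersetCard]
  refine Finset.card_bij' (fun S _ => S.erase v) (fun T _ => insert v T) ?hi ?hj ?li ?ri
  case hi =>
    intro S hS
    rcases Finset.mem_filter.mp hS with ⟨hS1, hS2⟩
    rw [mem_SS] at hS1
    rcases (hcond S hS1).mp hS2 with ⟨hvS, hsub⟩
    rw [Finset.mem_powersetCard]
    constructor
    · intro u hu
      rcases Finset.mem_erase.mp hu with ⟨hne, huS⟩
      exact hsub u huS hne
    · rw [Finset.card_erase_of_mem hvS, hS1]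
  case hj =>
    intro T hT
    rcases Finset.mem_powersetCard.mp hT with ⟨hTP, hTcard⟩
    have hvT : v ∉ T := fun h => hv (hTP h)
    have hcard : (insert v T).card = r := by
      rw [Finset.card_insert_of_notMem hvT, hTcard]
      omega
    rw [Finset.mem_filter, mem_SS]
    refine ⟨hcard, (hcond _ hcard).mpr ⟨Finset.mem_insert_self v T, ?_⟩⟩
    intro u hu hne
    rcases Finset.mem_insert.mp hu with h | h
    · exact absurd h hne
    · exact hTP h
  case li =>
    intro S hS
    rcases Finset.mem_filter.mp hS with ⟨hS1, hS2⟩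
    rw [mem_SS] at hS1
    exact Finset.insert_erase ((hcond S hS1).mp hS2).1
  case ri =>
    intro T hT
    rcases Finset.mem_powersetCard.mp hT with ⟨hTP, _⟩
    exact Finset.erase_insert (fun h => hv (hTP h))

/-- l ρ v = C(ρ v, r-1) -/
lemma card_isMax_eq {r : ℕ} (hr : 1 ≤ r) (ρ : Perm (Fin n)) (v : Fin n) :
    ((SS n r).filter (fun S => isMax ρ S v)).card = ((ρ v : Fin n) : ℕ).choose (r - 1) := by
  have hP : (univ.filter (fun u => ρ u < ρ v)).card = ((ρ v : Fin n) : ℕ) := by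
    rw [← Fin.card_Iio (ρ v)]
    apply Finset.card_bij (fun u _ => ρ u)
    · intro u hu
      rw [Finset.mem_Iio]
      exact (Finset.mem_filter.mp hu).2
    · intro u _ u' _ h
      exact ρ.injective h
    · intro w hw
      rw [Finset.mem_Iio] at hw
      exact ⟨ρ.symm w, by simp [hw], by simp⟩
  rw [← hP]
  apply card_max_sets hr v _ (by simp)
  intro S hScard
  constructor
  · rintro ⟨hvS, hle⟩
    refine ⟨hvS, fun u huS hne => ?_⟩
    rw [Finset.mem_filter]
    exact ⟨Finset.mem_univ u, lt_of_le_of_ne (hle u huS)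
      (fun h => hne (ρ.injective h))⟩
  · rintro ⟨hvS, hsub⟩
    refine ⟨hvS, fun u huS => ?_⟩
    by_cases hne : u = v
    · rw [hne]
    · exact le_of_lt (Finset.mem_filter.mp (hsub u huS hne)).2

/-- both-max count = C(m, r-1) -/
lemma card_isMax_pair_eq {r : ℕ} (hr : 1 ≤ r) (γ ρ : Perm (Fin n)) (v : Fin n) :
    ((SS n r).filter (fun S => isMax γ S v ∧ isMax ρ S v)).card
      = ((univ.filter (fun u => γ u < γ v ∧ ρ u < ρ v)).card).choose (r - 1) := by
  apply card_max_sets hr v _ (by simp)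
  intro S hScard
  constructor
  · rintro ⟨⟨hvS, hleγ⟩, ⟨_, hleρ⟩⟩
    refine ⟨hvS, fun u huS hne => ?_⟩
    rw [Finset.mem_filter]
    exact ⟨Finset.mem_univ u,
      lt_of_le_of_ne (hleγ u huS) (fun h => hne (γ.injective h)),
      lt_of_le_of_ne (hleρ u huS) (fun h => hne (ρ.injective h))⟩
  · rintro ⟨hvS, hsub⟩
    have hγ : ∀ u ∈ S, γ u ≤ γ v := by
      intro u huS
      by_cases hne : u = v
      · rw [hne]
      · exact le_of_lt (Finset.mem_filter.mp (hsub u huS hne)).2.1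
    have hρ : ∀ u ∈ S, ρ u ≤ ρ v := by
      intro u huS
      by_cases hne : u = v
      · rw [hne]
      · exact le_of_lt (Finset.mem_filter.mp (hsub u huS hne)).2.2
    exact ⟨⟨hvS, hγ⟩, ⟨hvS, hρ⟩⟩
section glue
variable {n r : ℕ} (sel : Finset (Fin n) → Fin n)

lemma fastSat_iff (hsel : ∀ S : Finset (Fin n), S.card = r → sel S ∈ S)
    (ρ : Perm (Fin n)) {S : Finset (Fin n)} (hS : S.card = r) :
    fastSat sel S ρ ↔ isMax ρ S (sel S) := by
  constructor
  · intro h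
    refine ⟨hsel S hS, fun u hu => ?_⟩
    by_cases hne : u = sel S
    · rw [hne]
    · exact le_of_lt (h u hu hne)
  · intro h u hu hne
    exact lt_of_le_of_ne (h.2 u hu) (fun he => hne (ρ.injective he))

lemma badCount_eq (hsel : ∀ S : Finset (Fin n), S.card = r → sel S ∈ S)
    (ρ : Perm (Fin n)) :
    badCount n r sel ρ = ((SS n r).filter (fun S => ¬ isMax ρ S (sel S))).card := by
  have h : {S : Finset (Fin n) | S.card = r ∧ ¬ fastSat sel S ρ}
      = ↑((SS n r).filter (fun S => ¬ isMax ρ S (sel S))) := by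
    ext S
    simp only [Set.mem_setOf_eq, Finset.coe_filter, mem_SS]
    exact and_congr_right (fun hS => not_congr (fastSat_iff sel hsel ρ hS))
  rw [badCount, h, Set.ncard_coe_finset]

lemma inDeg_eq (v : Fin n) :
    inDeg n r sel v = ((SS n r).filter (fun S => sel S = v)).card := by
  have h : {S : Finset (Fin n) | S.card = r ∧ sel S = v}
      = ↑((SS n r).filter (fun S => sel S = v)) := by
    ext S
    simp only [Set.mem_setOf_eq, Finset.coe_filter, mem_SS]
  rw [inDeg, h, Set.ncard_coe_finset]

lemma filter_split (s : Finset (Finset (Fin n))) (p q : Finset (Fin n) → Prop)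
    [DecidablePred p] [DecidablePred q] :
    (s.filter p).card = (s.filter (fun a => p a ∧ q a)).card
      + (s.filter (fun a => p a ∧ ¬ q a)).card := by
  rw [← Finset.filter_filter, ← Finset.filter_filter,
    Finset.card_filter_add_card_filter_not]

-- badCount as sum over selected-vertex fibers
lemma bad_eq_sum_sel (hsel : ∀ S : Finset (Fin n), S.card = r → sel S ∈ S)
    (ρ : Perm (Fin n)) :
    badCount n r sel ρ
      = ∑ v : Fin n, ((SS n r).filter (fun S => sel S = v ∧ ¬ isMax ρ S v)).card := by
  rw [badCount_eq sel hsel ρ]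
  rw [Finset.card_eq_sum_card_fiberwise
    (f := sel) (t := univ) (fun S _ => Finset.mem_univ (sel S))]
  apply Finset.sum_congr rfl
  intro v _
  congr 1
  ext S
  simp only [Finset.mem_filter]
  constructor
  · rintro ⟨⟨h1, h2⟩, h3⟩
    exact ⟨h1, h3, by rw [← h3]; exact h2⟩
  · rintro ⟨h1, h2, h3⟩
    exact ⟨⟨h1, by rw [h2]; exact h3⟩, h2⟩

-- badCount as sum over max-vertex fibers
lemma bad_eq_sum_max (hr : 2 ≤ r)
    (hsel : ∀ S : Finset (Fin n), S.card = r → sel S ∈ S) (ρ : Perm (Fin n)) :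
    badCount n r sel ρ
      = ∑ v : Fin n, ((SS n r).filter (fun S => isMax ρ S v ∧ ¬ sel S = v)).card := by
  rw [badCount_eq sel hsel ρ]
  rw [card_eq_sum_isMax ρ _ (fun S hS =>
    SS_nonempty_mem (by omega) (Finset.mem_filter.mp hS).1)]
  apply Finset.sum_congr rfl
  intro v _
  congr 1
  ext S
  simp only [Finset.mem_filter, Finset.mem_filter]
  constructor
  · rintro ⟨⟨h1, h2⟩, h3⟩
    exact ⟨h1, h3, fun he => h2 (by rw [he]; exact h3)⟩
  · rintro ⟨h1, h2, h3⟩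
    exact ⟨⟨h1, fun hm => h3 (isMax_unique hm h2)⟩, h2⟩


noncomputable def FF (r : ℕ) : ℕ → ℤ := fun t => (t.choose (r - 1) : ℤ)

lemma FF_mono (r : ℕ) : Monotone (FF r) :=
  fun a b h => by
    simp only [FF]
    exact_mod_cast Nat.choose_le_choose (r - 1) h

lemma FF_step (hr : 2 ≤ r) : ∀ s t : ℕ, s ≤ t →
    FF r (s + 1) - FF r s ≤ FF r (t + 1) - FF r t := by
  intro s t h
  have key : ∀ m : ℕ, FF r (m + 1) - FF r m = (m.choose (r - 2) : ℤ) := by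
    intro m
    simp only [FF]
    rw [show r - 1 = (r - 2) + 1 from by omega, Nat.choose_succ_succ]
    push_cast
    ring
  rw [key s, key t]
  exact_mod_cast Nat.choose_le_choose (r - 2) h

-- Lemma 1 : ∑_v |l_ρ(v) - In(v)| ≤ 2 b_ρ
lemma lemma1 (hr : 2 ≤ r) (hsel : ∀ S : Finset (Fin n), S.card = r → sel S ∈ S)
    (ρ : Perm (Fin n)) :
    ∑ v : Fin n, |FF r ((ρ v : Fin n) : ℕ) - (inDeg n r sel v : ℤ)|
      ≤ 2 * (badCount n r sel ρ : ℤ) := by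
  simp only [FF]
  have hpt : ∀ v : Fin n,
      |(((ρ v : Fin n) : ℕ).choose (r - 1) : ℤ) - (inDeg n r sel v : ℤ)|
      ≤ (((SS n r).filter (fun S => sel S = v ∧ ¬ isMax ρ S v)).card : ℤ)
        + (((SS n r).filter (fun S => isMax ρ S v ∧ ¬ sel S = v)).card : ℤ) := by
    intro v
    have h1 : inDeg n r sel v
        = ((SS n r).filter (fun S => sel S = v ∧ isMax ρ S v)).card
          + ((SS n r).filter (fun S => sel S = v ∧ ¬ isMax ρ S v)).card := by
      rw [inDeg_eq]
      exact filter_split _ _ _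
    have h2 : ((ρ v : Fin n) : ℕ).choose (r - 1)
        = ((SS n r).filter (fun S => isMax ρ S v ∧ sel S = v)).card
          + ((SS n r).filter (fun S => isMax ρ S v ∧ ¬ sel S = v)).card := by
      rw [← card_isMax_eq (by omega : 1 ≤ r) ρ v]
      exact filter_split _ _ _
    have h3 : ((SS n r).filter (fun S => isMax ρ S v ∧ sel S = v))
        = ((SS n r).filter (fun S => sel S = v ∧ isMax ρ S v)) := by
      ext S
      simp only [Finset.mem_filter]
      tauto
    rw [h1, h2, h3]
    push_cast
    set x := (((SS n r).filter (fun S => sel S = v ∧ isMax ρ S v)).card : ℤ)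
    set y := (((SS n r).filter (fun S => sel S = v ∧ ¬ isMax ρ S v)).card : ℤ)
    set w := (((SS n r).filter (fun S => isMax ρ S v ∧ ¬ sel S = v)).card : ℤ)
    have hy : 0 ≤ y := Int.natCast_nonneg _
    have hw : 0 ≤ w := Int.natCast_nonneg _
    rcases abs_cases (x + w - (x + y)) with ⟨h, _⟩ | ⟨h, _⟩ <;> omega
  calc ∑ v : Fin n, |(((ρ v : Fin n) : ℕ).choose (r - 1) : ℤ) - (inDeg n r sel v : ℤ)|
      ≤ ∑ v : Fin n,
        ((((SS n r).filter (fun S => sel S = v ∧ ¬ isMax ρ S v)).card : ℤ)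
          + (((SS n r).filter (fun S => isMax ρ S v ∧ ¬ sel S = v)).card : ℤ)) :=
        Finset.sum_le_sum (fun v _ => hpt v)
    _ = 2 * (badCount n r sel ρ : ℤ) := by
        rw [Finset.sum_add_distrib]
        rw [show ∑ v : Fin n, (((SS n r).filter
            (fun S => sel S = v ∧ ¬ isMax ρ S v)).card : ℤ)
          = ((badCount n r sel ρ : ℕ) : ℤ) from by
            rw [bad_eq_sum_sel sel hsel ρ]; push_cast; ring]
        rw [show ∑ v : Fin n, (((SS n r).filter
            (fun S => isMax ρ S v ∧ ¬ sel S = v)).card : ℤ)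
          = ((badCount n r sel ρ : ℕ) : ℤ) from by
            rw [bad_eq_sum_max sel hr hsel ρ]; push_cast; ring]
        ring

-- core reindexed over two permutations
lemma coreTwoPerm (f : ℕ → ℤ) (hf : Monotone f)
    (hstep : ∀ s t : ℕ, s ≤ t → f (s + 1) - f s ≤ f (t + 1) - f t)
    (ρ γ : Perm (Fin n)) :
    ∑ v : Fin n, (f ((γ v : Fin n) : ℕ)
        - f ((univ.filter (fun u => γ u < γ v ∧ ρ u < ρ v)).card))
      ≤ ∑ v : Fin n, |f ((ρ v : Fin n) : ℕ) - f ((γ v : Fin n) : ℕ)| := by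
  set π : Perm (Fin n) := γ.symm.trans ρ with hπ
  have hπap : ∀ u : Fin n, π (γ u) = ρ u := by
    intro u
    simp [hπ]
  have hm : ∀ v : Fin n, mcount π (γ v)
      = (univ.filter (fun u => γ u < γ v ∧ ρ u < ρ v)).card := by
    intro v
    rw [mcount]
    apply Finset.card_bij (fun y _ => γ.symm y)
    · intro y hy
      rcases Finset.mem_filter.mp hy with ⟨_, h1, h2⟩
      simp only [Finset.mem_filter, Finset.mem_univ, true_and]
      constructor
      · rw [show γ (γ.symm y) = y from γ.apply_symm_apply y] at *
        simpa using h1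
      · have := h2
        rw [show π y = ρ (γ.symm y) from by simp [hπ], hπap v] at this
        exact this
    · intro y _ y' _ h
      exact γ.symm.injective h
    · intro u hu
      rcases Finset.mem_filter.mp hu with ⟨_, h1, h2⟩
      refine ⟨γ u, ?_, by simp⟩
      simp only [Finset.mem_filter, Finset.mem_univ, true_and]
      exact ⟨h1, by rw [hπap u, hπap v]; exact h2⟩
  have hcore := core f hf hstep π
  have hL : ∑ x : Fin n, (f (x : ℕ) - f (mcount π x))
      = ∑ v : Fin n, (f ((γ v : Fin n) : ℕ)
        - f ((univ.filter (fun u => γ u < γ v ∧ ρ u < ρ v)).card)) := by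
    rw [← Equiv.sum_comp γ (fun x => f (x : ℕ) - f (mcount π x))]
    apply Finset.sum_congr rfl
    intro v _
    rw [hm v]
  have hR : ∑ x : Fin n, |f ((π x : Fin n) : ℕ) - f (x : ℕ)|
      = ∑ v : Fin n, |f ((ρ v : Fin n) : ℕ) - f ((γ v : Fin n) : ℕ)| := by
    rw [← Equiv.sum_comp γ (fun x => |f ((π x : Fin n) : ℕ) - f (x : ℕ)|)]
    apply Finset.sum_congr rfl
    intro v _
    rw [hπap v]
  rw [← hL, ← hR]
  exact hcore

-- Lemma 3 : b_ρ ≤ b_γ + ∑ |f(ρ v) - f(γ v)|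
lemma lemma3 (hr : 2 ≤ r) (hsel : ∀ S : Finset (Fin n), S.card = r → sel S ∈ S)
    (ρ γ : Perm (Fin n)) :
    (badCount n r sel ρ : ℤ) ≤ (badCount n r sel γ : ℤ)
      + ∑ v : Fin n, |FF r ((ρ v : Fin n) : ℕ) - FF r ((γ v : Fin n) : ℕ)| := by
  classical
  set f : ℕ → ℤ := FF r with hfdef
  -- b_ρ = ∑ (In v - sat_ρ v)
  have hbad : ∀ τ : Perm (Fin n), (badCount n r sel τ : ℤ)
      = ∑ v : Fin n, ((inDeg n r sel v : ℤ)
        - (((SS n r).filter (fun S => sel S = v ∧ isMax τ S v)).card : ℤ)) := by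
    intro τ
    rw [bad_eq_sum_sel sel hsel τ]
    push_cast
    apply Finset.sum_congr rfl
    intro v _
    have h1 : inDeg n r sel v
        = ((SS n r).filter (fun S => sel S = v ∧ isMax τ S v)).card
          + ((SS n r).filter (fun S => sel S = v ∧ ¬ isMax τ S v)).card := by
      rw [inDeg_eq]; exact filter_split _ _ _
    rw [h1]; push_cast; ring
  rw [hbad ρ, hbad γ]
  -- satγ v ≤ satρ v + gb v
  have hsat : ∀ v : Fin n,
      (((SS n r).filter (fun S => sel S = v ∧ isMax γ S v)).card : ℤ)
      ≤ (((SS n r).filter (fun S => sel S = v ∧ isMax ρ S v)).card : ℤ)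
        + (((SS n r).filter (fun S => isMax γ S v ∧ ¬ isMax ρ S v)).card : ℤ) := by
    intro v
    have hsub : (SS n r).filter (fun S => sel S = v ∧ isMax γ S v)
        ⊆ ((SS n r).filter (fun S => sel S = v ∧ isMax ρ S v))
          ∪ ((SS n r).filter (fun S => isMax γ S v ∧ ¬ isMax ρ S v)) := by
      intro S hS
      rcases Finset.mem_filter.mp hS with ⟨h1, h2, h3⟩
      rw [Finset.mem_union]
      by_cases hm : isMax ρ S v
      · exact Or.inl (Finset.mem_filter.mpr ⟨h1, h2, hm⟩)
      · exact Or.inr (Finset.mem_filter.mpr ⟨h1, h3, hm⟩)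
    have := (Finset.card_le_card hsub).trans (Finset.card_union_le _ _)
    exact_mod_cast this
  -- gb v = f(γ v) - f(m v)
  have hgb : ∀ v : Fin n,
      (((SS n r).filter (fun S => isMax γ S v ∧ ¬ isMax ρ S v)).card : ℤ)
      = f ((γ v : Fin n) : ℕ)
        - f ((univ.filter (fun u => γ u < γ v ∧ ρ u < ρ v)).card) := by
    intro v
    have h1 : ((SS n r).filter (fun S => isMax γ S v)).card
        = ((SS n r).filter (fun S => isMax γ S v ∧ isMax ρ S v)).card
          + ((SS n r).filter (fun S => isMax γ S v ∧ ¬ isMax ρ S v)).card :=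
      filter_split _ _ _
    have h2 := card_isMax_eq (by omega : 1 ≤ r) γ v
    have h3 := card_isMax_pair_eq (by omega : 1 ≤ r) γ ρ v
    rw [hfdef]
    simp only [FF]
    rw [← h2, ← h3, h1]
    push_cast
    ring
  have hcore := coreTwoPerm f (hfdef ▸ FF_mono r) (hfdef ▸ FF_step hr) ρ γ
  have hsum : ∑ v : Fin n, ((inDeg n r sel v : ℤ)
        - (((SS n r).filter (fun S => sel S = v ∧ isMax ρ S v)).card : ℤ))
      - ∑ v : Fin n, ((inDeg n r sel v : ℤ)
        - (((SS n r).filter (fun S => sel S = v ∧ isMax γ S v)).card : ℤ))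
      = ∑ v : Fin n, ((((SS n r).filter (fun S => sel S = v ∧ isMax γ S v)).card : ℤ)
        - (((SS n r).filter (fun S => sel S = v ∧ isMax ρ S v)).card : ℤ)) := by
    rw [← Finset.sum_sub_distrib]
    apply Finset.sum_congr rfl
    intro v _
    ring
  have hchain : ∑ v : Fin n, ((((SS n r).filter
        (fun S => sel S = v ∧ isMax γ S v)).card : ℤ)
        - (((SS n r).filter (fun S => sel S = v ∧ isMax ρ S v)).card : ℤ))
      ≤ ∑ v : Fin n, |f ((ρ v : Fin n) : ℕ) - f ((γ v : Fin n) : ℕ)| := by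
    calc _ ≤ ∑ v : Fin n, (((SS n r).filter
          (fun S => isMax γ S v ∧ ¬ isMax ρ S v)).card : ℤ) := by
          apply Finset.sum_le_sum
          intro v _
          have := hsat v
          linarith
      _ = ∑ v : Fin n, (f ((γ v : Fin n) : ℕ)
          - f ((univ.filter (fun u => γ u < γ v ∧ ρ u < ρ v)).card)) :=
          Finset.sum_congr rfl (fun v _ => hgb v)
      _ ≤ _ := hcore
  have heq : ∑ v : Fin n, |f ((ρ v : Fin n) : ℕ) - f ((γ v : Fin n) : ℕ)|
      = ∑ v : Fin n, |FF r ((ρ v : Fin n) : ℕ) - FF r ((γ v : Fin n) : ℕ)| := by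
    rw [hfdef]
  linarith [hsum, hchain, heq ▸ hchain]

end glue

end ID5

/-- The Inc-Degree algorithm is a 5-approximation for dense `r`-FAST: if `σA` orders the
vertices by non-decreasing in-degree and `σO` is an optimal ranking, then
`b_{σA} ≤ 5 · b_{σO}`. -/
theorem incdegree_five_approx
    {n r : ℕ} (hr : 2 ≤ r)
    (sel : Finset (Fin n) → Fin n)
    (hsel : ∀ S : Finset (Fin n), S.card = r → sel S ∈ S)
    (σA : Equiv.Perm (Fin n))
    (hA : ∀ u v : Fin n, σA u < σA v → inDeg n r sel u ≤ inDeg n r sel v)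
    (σO : Equiv.Perm (Fin n))
    (hO : ∀ ρ : Equiv.Perm (Fin n), badCount n r sel σO ≤ badCount n r sel ρ) :
    badCount n r sel σA ≤ 5 * badCount n r sel σO := by
  classical
  have h3 := ID5.lemma3 sel hr hsel σA σO
  have h1 := ID5.lemma1 sel hr hsel σO
  have h2 := ID5.rearrange (ID5.FF r) (ID5.FF_mono r)
    (fun v => (inDeg n r sel v : ℤ)) σA
    (fun u v h => by show ((inDeg n r sel u : ℕ) : ℤ) ≤ ((inDeg n r sel v : ℕ) : ℤ); exact_mod_cast hA u v h) σO
  have h1A := ID5.lemma1 sel hr hsel σA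
  have htri : ∑ v : Fin n, |ID5.FF r ((σA v : Fin n) : ℕ) - ID5.FF r ((σO v : Fin n) : ℕ)|
      ≤ (∑ v : Fin n, |ID5.FF r ((σA v : Fin n) : ℕ) - (inDeg n r sel v : ℤ)|)
        + ∑ v : Fin n, |ID5.FF r ((σO v : Fin n) : ℕ) - (inDeg n r sel v : ℤ)| := by
    rw [← Finset.sum_add_distrib]
    apply Finset.sum_le_sum
    intro v _
    calc |ID5.FF r ((σA v : Fin n) : ℕ) - ID5.FF r ((σO v : Fin n) : ℕ)|
        ≤ |ID5.FF r ((σA v : Fin n) : ℕ) - (inDeg n r sel v : ℤ)|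
          + |(inDeg n r sel v : ℤ) - ID5.FF r ((σO v : Fin n) : ℕ)| := abs_sub_le _ _ _
      _ = _ := by rw [abs_sub_comm ((inDeg n r sel v : ℤ)) _]
  have hfin : (badCount n r sel σA : ℤ) ≤ 5 * (badCount n r sel σO : ℤ) := by
    have e2 : ∑ v : Fin n, |ID5.FF r ((σA v : Fin n) : ℕ) - (inDeg n r sel v : ℤ)|
        ≤ ∑ v : Fin n, |ID5.FF r ((σO v : Fin n) : ℕ) - (inDeg n r sel v : ℤ)| := h2
    linarith
  exact_mod_cast hfin
end
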